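/- arXiv:1212.0257 — 7 statements merged into one kernel-verified Lean document; each statement's English description precedes it below -/
import Mathlib

section
/- The height of an element α of the monoid M_n equals the cardinality of the complement of its image: h(α) = |Y_n \ α(Y_n)|, where h(α) = m_1 + ⋯ + m_n is the sum of the translation lengths of α. In particular h(α) ≥ 0, and h(α) = 0 if and only if α is a bijection. -/
def Translates (n : ℕ) (g : Fin n × ℕ → Fin n × ℕ) (m : Fin n → ℤ) : Prop :=
  ∃ K : Finset (Fin n × ℕ), ∀ x : Fin n × ℕ, x ∉ K →
    (g x).1 = x.1 ∧ ((g x).2 : ℤ) = (x.2 : ℤ) + m x.1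

/-- For an injective eventual translation `α` of `Y_n` with translation tuple
`m`, the complement of the image of `α` is finite and the height
`h(α) = Σ mᵢ` equals its cardinality; in particular `h(α) ≥ 0`, with
`h(α) = 0` iff `α` is a bijection. -/
theorem height_eq_card_complement_range (n : ℕ)
    (α : Fin n × ℕ → Fin n × ℕ) (m : Fin n → ℤ)
    (hinj : Function.Injective α) (hm : Translates n α m) :
    (Set.range α)ᶜ.Finite ∧
    (∑ i, m i) = ((Set.range α)ᶜ.ncard : ℤ) ∧
    0 ≤ ∑ i, m i ∧
    ((∑ i, m i) = 0 ↔ Function.Bijective α) := by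
  classical
  obtain ⟨K, hK⟩ := hm
  set M : ℕ := ∑ k : Fin n, (m k).natAbs with hM
  set B : ℕ := K.sup (fun x => max x.2 (α x).2) + 1 with hB
  set T : ℕ := B + M + 1 with hT
  have hMk : ∀ k, (m k).natAbs ≤ M := by
    intro k
    rw [hM]
    exact Finset.single_le_sum (f := fun k => (m k).natAbs) (fun _ _ => Nat.zero_le _) (Finset.mem_univ k)
  have hKb : ∀ x ∈ K, x.2 < B ∧ (α x).2 < B := by
    intro x hx
    have hle := Finset.le_sup (f := fun x => max x.2 (α x).2) hx
    have h1 : x.2 ≤ K.sup (fun x => max x.2 (α x).2) := le_trans (le_max_left _ _) hle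
    have h2 : (α x).2 ≤ K.sup (fun x => max x.2 (α x).2) := le_trans (le_max_right _ _) hle
    omega
  -- every point high enough is in the range
  have hrange : ∀ y : Fin n × ℕ, T ≤ y.2 → y ∈ Set.range α := by
    intro y hy
    have habs := hMk y.1
    refine ⟨(y.1, ((y.2 : ℤ) - m y.1).toNat), ?_⟩
    have hq : (((y.2 : ℤ) - m y.1).toNat : ℤ) = (y.2 : ℤ) - m y.1 := by omega
    have hnK : (y.1, ((y.2 : ℤ) - m y.1).toNat) ∉ K := by
      intro h
      have := (hKb _ h).1
      simp only at this
      omega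
    obtain ⟨h1, h2⟩ := hK _ hnK
    have h2' : ((α (y.1, ((y.2 : ℤ) - m y.1).toNat)).2 : ℤ) = (y.2 : ℤ) := by
      rw [h2]; simp only; omega
    exact Prod.ext h1 (by exact_mod_cast h2')
  set W : Finset (Fin n × ℕ) := Finset.univ ×ˢ Finset.range (2*T) with hW
  set A : Finset (Fin n × ℕ) :=
    (Finset.univ ×ˢ Finset.range (3*T)).filter (fun x => (x.2 : ℤ) < 2*T - m x.1) with hA
  have hmemW : ∀ y : Fin n × ℕ, y ∈ W ↔ y.2 < 2*T := by
    intro y; simp [hW, Finset.mem_product]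
  have hmemA : ∀ x : Fin n × ℕ, x ∈ A ↔ x.2 < 3*T ∧ (x.2 : ℤ) < 2*T - m x.1 := by
    intro x; simp [hA, Finset.mem_product, Finset.mem_filter]
  have key : ∀ x, α x ∈ W ↔ x ∈ A := by
    intro x
    rw [hmemW, hmemA]
    by_cases hx : x ∈ K
    · have h1 := (hKb x hx).1
      have h2 := (hKb x hx).2
      have h3 := hMk x.1
      constructor
      · intro _; omega
      · intro _; omega
    · obtain ⟨hfst, hsnd⟩ := hK x hx
      have h3 := hMk x.1
      constructor
      · intro h; omega
      · rintro ⟨h1', h2'⟩; omega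
  -- cardinality of A
  have fib : ∀ k : Fin n, (A.filter (fun x => x.1 = k)).card = (2*(T:ℤ) - m k).toNat := by
    intro k
    have he : A.filter (fun x => x.1 = k)
        = (Finset.range ((2*(T:ℤ) - m k).toNat)).image (fun p => (k, p)) := by
      ext x
      simp only [Finset.mem_filter, hmemA, Finset.mem_image, Finset.mem_range]
      constructor
      · rintro ⟨⟨h1, h2⟩, h3⟩
        exact ⟨x.2, by subst h3; omega, by rw [← h3]⟩
      · rintro ⟨p, hp, rfl⟩
        have := hMk k
        refine ⟨⟨by omega, ?_⟩, rfl⟩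
        show (p : ℤ) < 2*(T:ℤ) - m k
        omega
    rw [he, Finset.card_image_of_injective _ (fun a b h => by simpa using h),
      Finset.card_range]
  have hAcard : (A.card : ℤ) = n * (2*T) - ∑ i, m i := by
    have h1 : A.card = ∑ k : Fin n, (A.filter (fun x => x.1 = k)).card :=
      Finset.card_eq_sum_card_fiberwise (fun x _ => Finset.mem_univ x.1)
    have h2 : (A.card : ℤ) = ∑ k : Fin n, (2*(T:ℤ) - m k) := by
      rw [h1]
      push_cast
      refine Finset.sum_congr rfl fun k _ => ?_
      rw [fib k]
      have := hMk k
      omega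
    rw [h2, Finset.sum_sub_distrib, Finset.sum_const, Finset.card_univ, Fintype.card_fin]
    push_cast
    ring
  have himg : A.image α = W.filter (fun y => y ∈ Set.range α) := by
    ext y
    simp only [Finset.mem_image, Finset.mem_filter, Set.mem_range]
    constructor
    · rintro ⟨x, hx, rfl⟩
      exact ⟨(key x).mpr hx, x, rfl⟩
    · rintro ⟨hyW, x, rfl⟩
      exact ⟨x, (key x).mp hyW, rfl⟩
  set C : Finset (Fin n × ℕ) := W.filter (fun y => y ∉ Set.range α) with hC
  have hcomplC : (Set.range α)ᶜ = ↑C := by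
    ext y
    simp only [Set.mem_compl_iff, hC, Finset.coe_filter, Set.mem_setOf_eq]
    constructor
    · intro hy
      refine ⟨?_, hy⟩
      rw [hmemW]
      by_contra h
      exact hy (hrange y (by omega))
    · intro h; exact h.2
  have hWcard : W.card = n * (2*T) := by
    simp [hW, Finset.card_product]
  have hsplit : A.card + C.card = W.card := by
    rw [← Finset.card_image_of_injective A hinj, himg, hC]
    exact Finset.card_filter_add_card_filter_not _
  have hCcard : (C.card : ℤ) = ∑ i, m i := by
    have h1 : (A.card : ℤ) + C.card = n * (2*T) := by exact_mod_cast hsplit.trans hWcard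
    linarith [hAcard]
  have hfin : (Set.range α)ᶜ.Finite := by rw [hcomplC]; exact C.finite_toSet
  have hncard : ((Set.range α)ᶜ.ncard : ℤ) = C.card := by
    rw [hcomplC, Set.ncard_coe_finset]
  have heq : (∑ i, m i) = ((Set.range α)ᶜ.ncard : ℤ) := by rw [hncard, hCcard]
  refine ⟨hfin, heq, by rw [heq]; positivity, ?_⟩
  constructor
  · intro h0
    refine ⟨hinj, ?_⟩
    have hzero : (Set.range α)ᶜ.ncard = 0 := by
      have := heq.symm.trans h0
      exact_mod_cast this
    have hempty : (Set.range α)ᶜ = ∅ := (Set.ncard_eq_zero hfin).mp hzero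
    intro y
    have hy : y ∈ Set.range α := by
      by_contra h
      exact Set.eq_empty_iff_forall_notMem.mp hempty y (Set.mem_compl h)
    exact hy
  · intro hb
    have hr : Set.range α = Set.univ := Set.range_eq_univ.mpr hb.2
    rw [heq, hr, Set.compl_univ, Set.ncard_empty]
    simp
end

section
/- Any two elements α₁, α₂ of M_n have a least upper bound with respect to the partial order given by left multiplication by the translation monoid T_n: there exists a unique β with β ≥ α₁, β ≥ α₂, and β' ≥ β whenever β' ≥ α₁ and β' ≥ α₂. -/
def IsEventualTranslation (n : ℕ) (g : Fin n × ℕ → Fin n × ℕ) : Prop :=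
  ∃ m : Fin n → ℤ, Translates n g m

/-- Membership in the monoid `M_n` of injective eventual translations of `Y_n`. -/
def InM (n : ℕ) (α : Fin n × ℕ → Fin n × ℕ) : Prop :=
  Function.Injective α ∧ IsEventualTranslation n α

/-- The element `t_1^{k_1} ⋯ t_n^{k_n}` of the translation monoid `T_n`. -/
def shiftMap (n : ℕ) (k : Fin n → ℕ) : Fin n × ℕ → Fin n × ℕ :=
  fun x => (x.1, x.2 + k x.1)

/-- `β ≥ α` iff `β = t·α` for some `t ∈ T_n`. -/
def Mge (n : ℕ) (β α : Fin n × ℕ → Fin n × ℕ) : Prop :=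
  ∃ k : Fin n → ℕ, β = α ∘ shiftMap n k

/-- Any two elements of `M_n` have a (unique) least upper bound for the
partial order given by left multiplication by `T_n`. -/
theorem exists_unique_lub (n : ℕ) (α₁ α₂ : Fin n × ℕ → Fin n × ℕ)
    (h₁ : InM n α₁) (h₂ : InM n α₂) :
    ∃! β : Fin n × ℕ → Fin n × ℕ, InM n β ∧ Mge n β α₁ ∧ Mge n β α₂ ∧
      ∀ β', InM n β' → Mge n β' α₁ → Mge n β' α₂ → Mge n β' β := by
  obtain ⟨inj₁, m₁, K₁, hK₁⟩ := h₁
  obtain ⟨inj₂, m₂, K₂, hK₂⟩ := h₂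
  have hshift_inj : ∀ k : Fin n → ℕ, Function.Injective (shiftMap n k) := by
    intro k x y hxy
    simp only [shiftMap, Prod.mk.injEq] at hxy
    obtain ⟨h1, h2⟩ := hxy
    rw [h1] at h2
    exact Prod.ext h1 (by omega)

  set P : Fin n → Set ℕ := fun i => {p | ∃ q, ∀ ℓ, α₁ (i, ℓ + p) = α₂ (i, ℓ + q)}
    with hP
  have hPne : ∀ i, (P i).Nonempty := by
    intro i
    set s : ℕ := (K₁ ∪ K₂).sup (fun x => x.2) with hs
    refine ⟨s + 1 + (m₂ i - m₁ i).toNat, s + 1 + (m₁ i - m₂ i).toNat, fun ℓ => ?_⟩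
    have hn1 : (i, ℓ + (s + 1 + (m₂ i - m₁ i).toNat)) ∉ K₁ := by
      intro hmem
      have := Finset.le_sup (f := fun x : Fin n × ℕ => x.2)
        (Finset.mem_union_left K₂ hmem)
      simp only [← hs] at this
      omega
    have hn2 : (i, ℓ + (s + 1 + (m₁ i - m₂ i).toNat)) ∉ K₂ := by
      intro hmem
      have := Finset.le_sup (f := fun x : Fin n × ℕ => x.2)
        (Finset.mem_union_right K₁ hmem)
      simp only [← hs] at this
      omega
    have e1 := hK₁ _ hn1
    have e2 := hK₂ _ hn2
    refine Prod.ext (e1.1.trans e2.1.symm) ?_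
    have h21 : ((α₁ (i, ℓ + (s + 1 + (m₂ i - m₁ i).toNat))).2 : ℤ)
        = ((ℓ + (s + 1 + (m₂ i - m₁ i).toNat) : ℕ) : ℤ) + m₁ i := e1.2
    have h22 : ((α₂ (i, ℓ + (s + 1 + (m₁ i - m₂ i).toNat))).2 : ℤ)
        = ((ℓ + (s + 1 + (m₁ i - m₂ i).toNat) : ℕ) : ℤ) + m₂ i := e2.2
    have : ((α₁ (i, ℓ + (s + 1 + (m₂ i - m₁ i).toNat))).2 : ℤ)
        = ((α₂ (i, ℓ + (s + 1 + (m₁ i - m₂ i).toNat))).2 : ℤ) := by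
      push_cast at h21 h22
      omega
    exact_mod_cast this
  set a : Fin n → ℕ := fun i => sInf (P i) with ha
  have haP : ∀ i, a i ∈ P i := fun i => Nat.sInf_mem (hPne i)
  choose b hb using haP
  set β : Fin n × ℕ → Fin n × ℕ := α₁ ∘ shiftMap n a with hβ
  have hβinj : Function.Injective β := inj₁.comp (hshift_inj a)
  have hβM : InM n β := by
    refine ⟨hβinj, fun i => m₁ i + a i, K₁.preimage (shiftMap n a)
      ((hshift_inj a).injOn), fun x hx => ?_⟩
    have hx' : shiftMap n a x ∉ K₁ := by
      intro hmem; exact hx (Finset.mem_preimage.mpr hmem)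
    have e := hK₁ _ hx'
    refine ⟨e.1, ?_⟩
    have e2 : ((α₁ (x.1, x.2 + a x.1)).2 : ℤ)
        = ((x.2 + a x.1 : ℕ) : ℤ) + m₁ x.1 := e.2
    show ((α₁ (x.1, x.2 + a x.1)).2 : ℤ) = (x.2 : ℤ) + (m₁ x.1 + (a x.1 : ℤ))
    push_cast at e2
    omega
  have hge₁ : Mge n β α₁ := ⟨a, rfl⟩
  have hge₂ : Mge n β α₂ := by
    refine ⟨b, funext fun x => ?_⟩
    simpa [shiftMap, hβ] using hb x.1 x.2
  have hlub : ∀ β', InM n β' → Mge n β' α₁ → Mge n β' α₂ → Mge n β' β := by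
    rintro β' hM' ⟨a', ha'⟩ ⟨b', hb'⟩
    have hmem : ∀ i, a' i ∈ P i := by
      intro i
      refine ⟨b' i, fun ℓ => ?_⟩
      have e1 := congrFun ha' (i, ℓ)
      have e2 := congrFun hb' (i, ℓ)
      simp only [Function.comp, shiftMap] at e1 e2
      exact e1.symm.trans e2
    have hle : ∀ i, a i ≤ a' i := fun i => Nat.sInf_le (hmem i)
    refine ⟨fun i => a' i - a i, funext fun x => ?_⟩
    have e1 := congrFun ha' x
    simp only [Function.comp, shiftMap] at e1 ⊢
    rw [e1]
    have : x.2 + a' x.1 = x.2 + (a' x.1 - a x.1) + a x.1 := by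
      have := hle x.1; omega
    rw [this]
    rfl
  refine ⟨β, ⟨hβM, hge₁, hge₂, hlub⟩, ?_⟩
  rintro β'' ⟨hM'', hge₁'', hge₂'', hlub''⟩
  obtain ⟨c, hc⟩ := hlub β'' hM'' hge₁'' hge₂''
  obtain ⟨c', hc'⟩ := hlub'' β hβM hge₁ hge₂
  funext x
  have key : β'' x = β'' (x.1, x.2 + c x.1 + c' x.1) := by
    have e1 := congrFun hc x
    have e2 := congrFun hc' (shiftMap n c x)
    simp only [Function.comp, shiftMap] at e1 e2
    exact e1.trans e2
  have hx := hM''.1 key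
  have h2 : x.2 = x.2 + c x.1 + c' x.1 := congrArg Prod.snd hx
  have hc0 : c x.1 = 0 := by omega
  have e1 := congrFun hc x
  simp only [Function.comp, shiftMap, hc0] at e1
  rw [e1]
  exact congrArg β (by simp)
end

section
/- In the partially ordered monoid M_n, if two elements α₁ and α₂ have some common lower bound, then they have a greatest lower bound: there is a unique β with β ≤ α₁, β ≤ α₂, and β ≥ β' for every common lower bound β'. -/
lemma shiftMap_injective (n : ℕ) (k : Fin n → ℕ) : Function.Injective (shiftMap n k) := by
  intro x y h
  simp only [shiftMap, Prod.mk.injEq] at h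
  obtain ⟨h1, h2⟩ := h
  have : x.2 = y.2 := by rw [h1] at h2; omega
  exact Prod.ext h1 this

lemma translates_unique {n : ℕ} {g : Fin n × ℕ → Fin n × ℕ} {m m' : Fin n → ℤ}
    (h : Translates n g m) (h' : Translates n g m') : m = m' := by
  obtain ⟨K, hK⟩ := h
  obtain ⟨K', hK'⟩ := h'
  funext i
  set N := (K ∪ K').sup (fun x => x.2) + 1 with hN
  have hx : (i, N) ∉ K ∪ K' := by
    intro hmem
    have := Finset.le_sup (f := fun x : Fin n × ℕ => x.2) hmem
    simp only at this
    omega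
  have h1 := (hK (i, N) (fun h => hx (Finset.mem_union_left _ h))).2
  have h2 := (hK' (i, N) (fun h => hx (Finset.mem_union_right _ h))).2
  simp only at h1 h2
  omega

lemma translates_comp {n : ℕ} {g : Fin n × ℕ → Fin n × ℕ} {m : Fin n → ℤ}
    (h : Translates n g m) (k : Fin n → ℕ) :
    Translates n (g ∘ shiftMap n k) (fun i => m i + k i) := by
  obtain ⟨K, hK⟩ := h
  refine ⟨K.preimage (shiftMap n k) ((shiftMap_injective n k).injOn), ?_⟩
  intro x hx
  have hx' : shiftMap n k x ∉ K := fun hmem => hx (Finset.mem_preimage.mpr hmem)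
  have hgk := hK _ hx'
  constructor
  · rw [Function.comp_apply, hgk.1]; rfl
  · rw [Function.comp_apply, hgk.2]
    simp only [shiftMap]
    push_cast
    ring

/-- If two elements of `M_n` have some common lower bound, then they have a
(unique) greatest lower bound. -/
theorem exists_unique_glb (n : ℕ) (α₁ α₂ : Fin n × ℕ → Fin n × ℕ)
    (h₁ : InM n α₁) (h₂ : InM n α₂)
    (hlb : ∃ γ, InM n γ ∧ Mge n α₁ γ ∧ Mge n α₂ γ) :
    ∃! β : Fin n × ℕ → Fin n × ℕ, InM n β ∧ Mge n α₁ β ∧ Mge n α₂ β ∧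
      ∀ β', InM n β' → Mge n α₁ β' → Mge n α₂ β' → Mge n β β' := by
  obtain ⟨γ, hγ, ⟨k₁, e₁⟩, ⟨k₂, e₂⟩⟩ := hlb
  obtain ⟨mγ, hmγ⟩ := hγ.2
  set β : Fin n × ℕ → Fin n × ℕ := γ ∘ shiftMap n (fun i => min (k₁ i) (k₂ i)) with hβ
  have hβM : InM n β := ⟨hγ.1.comp (shiftMap_injective n _), ⟨_, translates_comp hmγ _⟩⟩
  have hge1 : Mge n α₁ β := by
    refine ⟨fun i => k₁ i - min (k₁ i) (k₂ i), ?_⟩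
    funext x
    simp only [e₁, hβ, Function.comp_apply, shiftMap]
    have harg : x.2 + k₁ x.1 =
        x.2 + (k₁ x.1 - min (k₁ x.1) (k₂ x.1)) + min (k₁ x.1) (k₂ x.1) := by omega
    rw [harg]
  have hge2 : Mge n α₂ β := by
    refine ⟨fun i => k₂ i - min (k₁ i) (k₂ i), ?_⟩
    funext x
    simp only [e₂, hβ, Function.comp_apply, shiftMap]
    have harg : x.2 + k₂ x.1 =
        x.2 + (k₂ x.1 - min (k₁ x.1) (k₂ x.1)) + min (k₁ x.1) (k₂ x.1) := by omega
    rw [harg]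
  have hgreat : ∀ β', InM n β' → Mge n α₁ β' → Mge n α₂ β' → Mge n β β' := by
    rintro β' hβ' ⟨a, ea⟩ ⟨b, eb⟩
    obtain ⟨mβ', hmβ'⟩ := hβ'.2
    have t1 : Translates n α₁ (fun i => mγ i + k₁ i) := e₁ ▸ translates_comp hmγ k₁
    have t1' : Translates n α₁ (fun i => mβ' i + a i) := ea ▸ translates_comp hmβ' a
    have t2 : Translates n α₂ (fun i => mγ i + k₂ i) := e₂ ▸ translates_comp hmγ k₂
    have t2' : Translates n α₂ (fun i => mβ' i + b i) := eb ▸ translates_comp hmβ' b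
    have E1 := congrFun (translates_unique t1 t1')
    have E2 := congrFun (translates_unique t2 t2')
    refine ⟨fun i => min (a i) (b i), ?_⟩
    funext x
    have E1x := E1 x.1
    have E2x := E2 x.1
    have h1 := congrFun e₁ x
    have h2 := congrFun ea x
    have h3 := congrFun e₂ x
    have h4 := congrFun eb x
    simp only [Function.comp_apply, shiftMap] at h1 h2 h3 h4
    simp only [hβ, Function.comp_apply, shiftMap]
    by_cases hc : k₁ x.1 ≤ k₂ x.1
    · have hab : a x.1 ≤ b x.1 := by omega
      rw [min_eq_left hc, min_eq_left hab, ← h1, ← h2]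
    · have hab : b x.1 ≤ a x.1 := by omega
      rw [min_eq_right (le_of_not_ge hc), min_eq_right hab, ← h3, ← h4]
  refine ⟨β, ⟨hβM, hge1, hge2, hgreat⟩, ?_⟩
  rintro y ⟨hyM, hy1, hy2, hyg⟩
  obtain ⟨c, hcEq⟩ := hyg β hβM hge1 hge2
  obtain ⟨c', hc'Eq⟩ := hgreat y hyM hy1 hy2
  have hcomp : β = (β ∘ shiftMap n c) ∘ shiftMap n c' := by
    rw [← hcEq]; exact hc'Eq
  have hc0 : ∀ i, c i = 0 := by
    intro i
    have h := congrFun hcomp (i, 0)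
    simp only [Function.comp_apply, shiftMap] at h
    have hinj := hβM.1 h
    rw [Prod.ext_iff] at hinj
    have := hinj.2
    simp only at this
    omega
  funext x
  have := congrFun hcEq x
  rw [this]
  simp [shiftMap, hc0]
end

section
/- M_n = T_n · H_n: every injective eventual translation β of Y_n factors as β = t·g where t is a product of the elementary ray-shifts t_1,…,t_n and g is a bijective eventual translation (an element of Houghton's group H_n). -/
lemma range_compl_finite (n : ℕ) (β : Fin n × ℕ → Fin n × ℕ)
    (m : Fin n → ℤ) (hT : Translates n β m) :
    ((Set.range β)ᶜ).Finite := by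
  obtain ⟨K, hK⟩ := hT
  set B : ℕ := K.sup (fun x => x.2) with hB
  set M : ℕ := Finset.univ.sup (fun j => (m j).natAbs) with hM
  have hrange : ∀ j : Fin n, ∀ q : ℕ, B + M + 1 ≤ q → (j, q) ∈ Set.range β := by
    intro j q hq
    have hM' : (m j).natAbs ≤ M := Finset.le_sup (f := fun j => (m j).natAbs) (Finset.mem_univ j)
    have habs : |m j| ≤ (M : ℤ) := by
      rw [Int.abs_eq_natAbs]; exact_mod_cast hM'
    obtain ⟨hmj', hmj⟩ := abs_le.mp habs
    have hq' : (B : ℤ) + M + 1 ≤ (q : ℤ) := by exact_mod_cast hq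
    set p : ℕ := ((q : ℤ) - m j).toNat with hp'
    have hp : (p : ℤ) = (q : ℤ) - m j := Int.toNat_of_nonneg (by omega)
    have hpB : B < p := by
      have : (B : ℤ) < (p : ℤ) := by omega
      exact_mod_cast this
    have hpK : (j, p) ∉ K := by
      intro h
      have hle : p ≤ B := Finset.le_sup (f := fun x : Fin n × ℕ => x.2) h
      omega
    obtain ⟨h1, h2⟩ := hK (j, p) hpK
    refine ⟨(j, p), ?_⟩
    have hsnd : ((β (j, p)).2 : ℤ) = (q : ℤ) := by rw [h2]; simp only [hp]; ring
    have hsnd' : (β (j, p)).2 = q := by exact_mod_cast hsnd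
    exact Prod.ext h1 hsnd'
  apply Set.Finite.subset
    (((Finset.univ : Finset (Fin n)) ×ˢ Finset.range (B + M + 1)).finite_toSet)
  intro x hx
  simp only [Finset.coe_product, Set.mem_prod, Finset.coe_range, Set.mem_Iio,
    Finset.mem_coe, Finset.coe_univ, Set.mem_univ, true_and]
  by_contra h
  exact hx (hrange x.1 x.2 (by omega))

/-- `M_n = T_n · H_n`: every injective eventual translation `β` of `Y_n`
factors as `β = t·g` with `t = t_1^{k_1}⋯t_n^{k_n} ∈ T_n` and `g` a bijective
eventual translation (an element of Houghton's group `H_n`). -/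
theorem M_eq_T_mul_H (n : ℕ) (β : Fin n × ℕ → Fin n × ℕ) (hβ : InM n β) :
    ∃ (k : Fin n → ℕ) (g : Fin n × ℕ → Fin n × ℕ),
      Function.Bijective g ∧ IsEventualTranslation n g ∧
        β = g ∘ shiftMap n k := by
  classical
  obtain ⟨hinj, m, hT⟩ := hβ
  rcases Nat.eq_zero_or_pos n with hn | hn
  · subst hn
    refine ⟨0, β, ⟨hinj, fun y => y.1.elim0⟩, ⟨m, hT⟩, ?_⟩
    funext x
    exact x.1.elim0
  obtain ⟨K, hK⟩ := hT
  have hfin : ((Set.range β)ᶜ).Finite := range_compl_finite n β m ⟨K, hK⟩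
  set R : Finset (Fin n × ℕ) := hfin.toFinset with hRdef
  set c : ℕ := R.card with hc
  have hR : ∀ y, y ∈ R ↔ y ∉ Set.range β := by
    intro y; simp [hRdef]
  set i0 : Fin n := ⟨0, hn⟩ with hi0
  set k : Fin n → ℕ := fun j => if j = i0 then c else 0 with hk
  have hk_le : ∀ j, k j ≤ c := by
    intro j; simp only [hk]; split <;> omega
  set Sc : Finset (Fin n × ℕ) := (Finset.range c).image (fun p => (i0, p)) with hScdef
  have hSc_card : Sc.card = c := by
    rw [hScdef, Finset.card_image_of_injective _ (fun a b h => by simpa using h),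
      Finset.card_range]
  have hmemSc : ∀ x : Fin n × ℕ, x ∈ Sc ↔ x.2 < k x.1 := by
    intro x
    simp only [hScdef, Finset.mem_image, Finset.mem_range]
    constructor
    · rintro ⟨p, hp, rfl⟩
      simp [hk, hp]
    · intro h
      by_cases h1 : x.1 = i0
      · refine ⟨x.2, ?_, ?_⟩
        · simpa [hk, h1] using h
        · rw [← h1]
      · simp [hk, h1] at h
  set e : {x // x ∈ Sc} ≃ {x // x ∈ R} := Finset.equivOfCardEq (hSc_card.trans hc.symm ▸ rfl) with he
  set g : Fin n × ℕ → Fin n × ℕ :=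
    fun x => if h : x.2 < k x.1 then ((e ⟨x, (hmemSc x).mpr h⟩ : {y // y ∈ R}) : Fin n × ℕ)
      else β (x.1, x.2 - k x.1) with hg
  have hg_then : ∀ x (h : x.2 < k x.1),
      g x = ((e ⟨x, (hmemSc x).mpr h⟩ : {y // y ∈ R}) : Fin n × ℕ) := by
    intro x h; simp only [hg]; rw [dif_pos h]
  have hg_else : ∀ x, ¬ (x.2 < k x.1) → g x = β (x.1, x.2 - k x.1) := by
    intro x h; simp only [hg]; rw [dif_neg h]
  have hg_then_not_range : ∀ x (h : x.2 < k x.1), g x ∉ Set.range β := by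
    intro x h
    rw [hg_then x h]
    exact (hR _).mp (e ⟨x, (hmemSc x).mpr h⟩).2
  have hg_inj : Function.Injective g := by
    intro x y hxy
    by_cases hx : x.2 < k x.1 <;> by_cases hy : y.2 < k y.1
    · rw [hg_then x hx, hg_then y hy] at hxy
      have := e.injective (Subtype.ext hxy)
      exact Subtype.ext_iff.mp this
    · exfalso
      apply hg_then_not_range x hx
      rw [hxy, hg_else y hy]
      exact ⟨_, rfl⟩
    · exfalso
      apply hg_then_not_range y hy
      rw [← hxy, hg_else x hx]
      exact ⟨_, rfl⟩
    · rw [hg_else x hx, hg_else y hy] at hxy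
      have h := hinj hxy
      have h1 : x.1 = y.1 := (Prod.ext_iff.mp h).1
      have h2 : x.2 - k x.1 = y.2 - k y.1 := (Prod.ext_iff.mp h).2
      have h3 : k x.1 = k y.1 := congrArg k h1
      exact Prod.ext h1 (by omega)
  have hg_surj : Function.Surjective g := by
    intro y
    by_cases hy : y ∈ Set.range β
    · obtain ⟨z, rfl⟩ := hy
      refine ⟨(z.1, z.2 + k z.1), ?_⟩
      have hlt : ¬ ((z.1, z.2 + k z.1).2 < k (z.1, z.2 + k z.1).1) := by simp
      rw [hg_else _ hlt]
      simp
    · set s := e.symm ⟨y, (hR y).mpr hy⟩ with hs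
      refine ⟨s.val, ?_⟩
      have hmem : s.val ∈ Sc := s.2
      have hlt := (hmemSc _).mp hmem
      rw [hg_then _ hlt]
      have : (⟨s.val, (hmemSc _).mpr hlt⟩ : {x // x ∈ Sc}) = s := Subtype.ext rfl
      rw [this, hs, Equiv.apply_symm_apply]
  have hET : IsEventualTranslation n g := by
    refine ⟨fun j => m j - (k j : ℤ),
      (Finset.univ : Finset (Fin n)) ×ˢ Finset.range (K.sup (fun x => x.2) + c + 1), ?_⟩
    intro x hx
    have hx2 : K.sup (fun x => x.2) + c + 1 ≤ x.2 := by
      by_contra h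
      exact hx (Finset.mem_product.mpr ⟨Finset.mem_univ _, Finset.mem_range.mpr (by omega)⟩)
    have hkx := hk_le x.1
    have hlt : ¬ (x.2 < k x.1) := by omega
    rw [hg_else x hlt]
    have hnK : (x.1, x.2 - k x.1) ∉ K := by
      intro h
      have hle : x.2 - k x.1 ≤ K.sup (fun x => x.2) :=
        Finset.le_sup (f := fun x : Fin n × ℕ => x.2) h
      omega
    obtain ⟨h1, h2⟩ := hK _ hnK
    refine ⟨h1, ?_⟩
    rw [h2]
    have : ((x.2 - k x.1 : ℕ) : ℤ) = (x.2 : ℤ) - (k x.1 : ℤ) := by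
      rw [Nat.cast_sub (by omega)]
    simp only [this]
    ring
  refine ⟨k, g, ⟨hg_inj, hg_surj⟩, hET, ?_⟩
  funext x
  simp only [Function.comp_apply, shiftMap]
  have hlt : ¬ ((x.1, x.2 + k x.1).2 < k (x.1, x.2 + k x.1).1) := by simp
  rw [hg_else _ hlt]
  simp
end

section
/- For a vertex α of M_n with height h(α) = h, the set of maximal elements below α (elements β with α = t_i·β for some generator t_i) is in bijection with {1,…,n} × S(α), where S(α) = Y_n \ α(Y_n); in particular there are exactly n·h such elements. -/
section Aux

variable {n : ℕ}

/-- The candidate maximal element: shift `α` down on ray `i`, putting `s` at `(i,0)`. -/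
def betaOf (α : Fin n × ℕ → Fin n × ℕ) (i : Fin n) (s : Fin n × ℕ) :
    Fin n × ℕ → Fin n × ℕ := fun x =>
  if x.1 = i then
    match x.2 with
    | 0 => s
    | (m + 1) => α (i, m)
  else α x

lemma betaOf_zero (α : Fin n × ℕ → Fin n × ℕ) (i : Fin n) (s : Fin n × ℕ) :
    betaOf α i s (i, 0) = s := by simp [betaOf]

lemma betaOf_succ (α : Fin n × ℕ → Fin n × ℕ) (i : Fin n) (s : Fin n × ℕ) (m : ℕ) :
    betaOf α i s (i, m + 1) = α (i, m) := by simp [betaOf]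

lemma betaOf_ne (α : Fin n × ℕ → Fin n × ℕ) (i : Fin n) (s : Fin n × ℕ)
    {x : Fin n × ℕ} (h : x.1 ≠ i) : betaOf α i s x = α x := by
  simp [betaOf, h]

lemma betaOf_comp (α : Fin n × ℕ → Fin n × ℕ) (i : Fin n) (s : Fin n × ℕ) :
    α = betaOf α i s ∘ shiftMap n (fun j => if j = i then 1 else 0) := by
  funext x
  obtain ⟨a, b⟩ := x
  by_cases h : a = i
  · subst h
    simp [Function.comp, shiftMap, betaOf_succ]
  · simp [Function.comp, shiftMap, h, betaOf_ne]

lemma betaOf_injective {α : Fin n × ℕ → Fin n × ℕ} (hinj : Function.Injective α)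
    {i : Fin n} {s : Fin n × ℕ} (hs : s ∉ Set.range α) :
    Function.Injective (betaOf α i s) := by
  rintro ⟨a, b⟩ ⟨c, d⟩ h
  by_cases h1 : a = i <;> by_cases h2 : c = i
  · rw [h1] at h ⊢; rw [h2] at h ⊢
    rcases b with _ | b <;> rcases d with _ | d
    · rfl
    · rw [betaOf_zero, betaOf_succ] at h
      exact absurd ⟨(i, d), h.symm⟩ hs
    · rw [betaOf_zero, betaOf_succ] at h
      exact absurd ⟨(i, b), h⟩ hs
    · rw [betaOf_succ, betaOf_succ] at h
      have := hinj h
      simp only [Prod.mk.injEq] at this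
      simp [this.2]
  · rw [h1] at h ⊢
    rcases b with _ | b
    · rw [betaOf_zero, betaOf_ne α i s (by simpa using h2)] at h
      exact absurd ⟨(c, d), h.symm⟩ hs
    · rw [betaOf_succ, betaOf_ne α i s (by simpa using h2)] at h
      have := hinj h
      simp only [Prod.mk.injEq] at this
      exact absurd this.1.symm h2
  · rw [h2] at h ⊢
    rcases d with _ | d
    · rw [betaOf_zero, betaOf_ne α i s (by simpa using h1)] at h
      exact absurd ⟨(a, b), h⟩ hs
    · rw [betaOf_succ, betaOf_ne α i s (by simpa using h1)] at h
      have := hinj h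
      simp only [Prod.mk.injEq] at this
      exact absurd this.1 h1
  · rw [betaOf_ne α i s (by simpa using h1), betaOf_ne α i s (by simpa using h2)] at h
    exact hinj h

lemma betaOf_eventual {α : Fin n × ℕ → Fin n × ℕ}
    (h : IsEventualTranslation n α) (i : Fin n) (s : Fin n × ℕ) :
    IsEventualTranslation n (betaOf α i s) := by
  obtain ⟨m, K, hK⟩ := h
  refine ⟨fun j => if j = i then m i - 1 else m j,
    insert (i, 0) (K ∪ K.image (fun x => (x.1, x.2 + 1))), ?_⟩
  rintro ⟨a, b⟩ hx
  simp only [Finset.mem_insert, Finset.mem_union, Finset.mem_image, Prod.mk.injEq,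
    not_or, not_exists, not_and] at hx
  obtain ⟨hx0, hx1, hx2⟩ := hx
  by_cases h1 : a = i
  · rcases b with _ | b
    · exact absurd rfl (hx0 h1)
    · have hb : (i, b) ∉ K := by
        intro hmem
        exact hx2 (i, b) hmem h1.symm rfl
      obtain ⟨c1, c2⟩ := hK (i, b) hb
      rw [show ((a, b + 1) : Fin n × ℕ) = (i, b + 1) from by rw [h1], betaOf_succ]
      refine ⟨c1, ?_⟩
      simp only [h1, if_pos rfl]
      push_cast at c2 ⊢
      omega
  · rw [betaOf_ne α i s (by simpa using h1)]
    obtain ⟨c1, c2⟩ := hK (a, b) hx1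
    exact ⟨c1, by simp only [if_neg h1]; exact c2⟩

lemma compl_range_finite {α : Fin n × ℕ → Fin n × ℕ} (hα : InM n α) :
    ((Set.range α)ᶜ).Finite := by
  obtain ⟨hinj, m, K, hK⟩ := hα
  set M : ℕ := (K.sup fun x => x.2) + 1 with hM
  set B : ℕ := M + (Finset.univ.sup fun j : Fin n => (m j).natAbs) with hB
  apply Set.Finite.subset
    ((Set.finite_univ : (Set.univ : Set (Fin n)).Finite).prod (Set.finite_Iio B))
  rintro ⟨j, l⟩ hl
  simp only [Set.mem_prod, Set.mem_Iio, Set.mem_univ, true_and]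
  by_contra hge
  push_neg at hge
  apply hl
  have hj : (m j).natAbs ≤ Finset.univ.sup fun j : Fin n => (m j).natAbs :=
    Finset.le_sup (f := fun j : Fin n => (m j).natAbs) (Finset.mem_univ j)
  have hnn : (0 : ℤ) ≤ (l : ℤ) - m j := by omega
  set x2 : ℕ := ((l : ℤ) - m j).toNat with hx2
  have hx2' : (x2 : ℤ) = (l : ℤ) - m j := Int.toNat_of_nonneg hnn
  have hxK : (j, x2) ∉ K := by
    intro hmem
    have : x2 ≤ K.sup fun x => x.2 := Finset.le_sup (f := fun x : Fin n × ℕ => x.2) hmem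
    omega
  obtain ⟨c1, c2⟩ := hK (j, x2) hxK
  refine ⟨(j, x2), ?_⟩
  have c2' : ((α (j, x2)).2 : ℤ) = (x2 : ℤ) + m j := c2
  have : ((α (j, x2)).2 : ℤ) = (l : ℤ) := by omega
  have h2 : (α (j, x2)).2 = l := by exact_mod_cast this
  exact Prod.ext c1 h2

end Aux

/-- For `α ∈ M_n` with height `h = |S(α)|` where `S(α) = Y_n ∖ α(Y_n)`, the set
of maximal elements below `α` (the `β ∈ M_n` with `α = t_i·β` for some
generator `t_i`) is finite, in bijection with `{1,…,n} × S(α)`; in particular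
it has exactly `n·h` elements. -/
theorem maximal_elements_card (n : ℕ) (α : Fin n × ℕ → Fin n × ℕ)
    (hα : InM n α) :
    {β | InM n β ∧ ∃ i : Fin n,
        α = β ∘ shiftMap n (fun j => if j = i then 1 else 0)}.Finite ∧
    Nonempty
      (↥{β | InM n β ∧ ∃ i : Fin n,
          α = β ∘ shiftMap n (fun j => if j = i then 1 else 0)} ≃
        Fin n × ↥((Set.range α)ᶜ)) ∧
    {β | InM n β ∧ ∃ i : Fin n,
        α = β ∘ shiftMap n (fun j => if j = i then 1 else 0)}.ncard =
      n * (Set.range α)ᶜ.ncard := by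
  obtain ⟨hinj, htrans⟩ := hα
  set S : Set (Fin n × ℕ → Fin n × ℕ) := {β | InM n β ∧ ∃ i : Fin n,
      α = β ∘ shiftMap n (fun j => if j = i then 1 else 0)} with hS
  -- the map from pairs to maximal elements
  have hFmem : ∀ (i : Fin n) (s : ↥((Set.range α)ᶜ)), betaOf α i s.1 ∈ S := by
    intro i s
    refine ⟨⟨betaOf_injective hinj s.2, betaOf_eventual htrans i s.1⟩, i,
      betaOf_comp α i s.1⟩
  set F : Fin n × ↥((Set.range α)ᶜ) → ↥S :=
    fun p => ⟨betaOf α p.1 p.2.1, hFmem p.1 p.2⟩ with hF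
  have hFinj : Function.Injective F := by
    rintro ⟨i, s, hs⟩ ⟨i', s', hs'⟩ h
    have h' : betaOf α i s = betaOf α i' s' := congrArg Subtype.val h
    have hii : i = i' := by
      by_contra hne
      have := congrFun h' (i, 0)
      rw [betaOf_zero, betaOf_ne α i' s' (by simpa using hne)] at this
      exact hs ⟨(i, 0), this.symm⟩
    subst hii
    have := congrFun h' (i, 0)
    rw [betaOf_zero, betaOf_zero] at this
    simp [this]
  have hFsurj : Function.Surjective F := by
    rintro ⟨β, ⟨⟨binj, btrans⟩, i, hcomp⟩⟩
    have hs : β (i, 0) ∉ Set.range α := by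
      rintro ⟨x, hx⟩
      rw [hcomp] at hx
      have := binj hx
      obtain ⟨a, b⟩ := x
      simp only [shiftMap, Prod.mk.injEq] at this
      obtain ⟨h1, h2⟩ := this
      simp [h1] at h2
    refine ⟨(i, ⟨β (i, 0), hs⟩), ?_⟩
    apply Subtype.ext
    show betaOf α i (β (i, 0)) = β
    funext x
    obtain ⟨a, b⟩ := x
    by_cases h1 : a = i
    · subst h1
      rcases b with _ | b
      · rw [betaOf_zero]
      · rw [betaOf_succ, hcomp]
        simp [shiftMap]
    · rw [betaOf_ne α i _ (by simpa using h1), hcomp]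
      simp [shiftMap, h1]
  have hcompl : ((Set.range α)ᶜ).Finite := compl_range_finite ⟨hinj, htrans⟩
  haveI : Finite ↥((Set.range α)ᶜ) := hcompl.to_subtype
  haveI : Finite ↥S := Finite.of_surjective F hFsurj
  have hSfin : S.Finite := Set.finite_coe_iff.mp inferInstance
  have e : ↥S ≃ Fin n × ↥((Set.range α)ᶜ) :=
    (Equiv.ofBijective F ⟨hFinj, hFsurj⟩).symm
  refine ⟨hSfin, ⟨e⟩, ?_⟩
  have h1 : S.ncard = Nat.card ↥S := (Nat.card_coe_set_eq S).symm
  rw [h1, Nat.card_congr e, Nat.card_prod, Nat.card_eq_fintype_card,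
    Fintype.card_fin, Nat.card_coe_set_eq]
end

section
/- For n ≥ 3, Houghton's group H_n is generated by g_1,…,g_{n−1}: every eventual translation of Y_n is a product of the maps g_i and their inverses. -/
/-- The generator `g_i` of Houghton's group (rays indexed by `Fin n`, ray `0`
playing the role of `R_1` and ray `i` that of `R_{i+1}`). -/
def gFun (n : ℕ) [NeZero n] (i : Fin n) : Fin n × ℕ → Fin n × ℕ := fun x =>
  if x.1 = 0 then (if x.2 = 0 then (i, 0) else (0, x.2 - 1))
  else if x.1 = i then (i, x.2 + 1) else x


def hFun (n : ℕ) [NeZero n] (i : Fin n) : Fin n × ℕ → Fin n × ℕ := fun x =>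
  if x.1 = 0 then (0, x.2 + 1)
  else if x.1 = i then (if x.2 = 0 then (0, 0) else (i, x.2 - 1)) else x

def gPerm (n : ℕ) [NeZero n] (i : Fin n) (hi : i ≠ 0) : Equiv.Perm (Fin n × ℕ) where
  toFun := gFun n i
  invFun := hFun n i
  left_inv := by
    rintro ⟨a, p⟩
    by_cases ha : a = 0
    · subst ha
      by_cases hp : p = 0 <;> simp [gFun, hFun, hp, hi, Ne.symm hi] <;> omega
    · by_cases hai : a = i
      · subst hai
        simp [gFun, hFun, ha, hi]
      · simp [gFun, hFun, ha, hai]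
  right_inv := by
    rintro ⟨a, p⟩
    by_cases ha : a = 0
    · subst ha
      simp [gFun, hFun, Ne.symm hi, hi]
    · by_cases hai : a = i
      · subst hai
        by_cases hp : p = 0 <;> simp [gFun, hFun, hp, hi, ha] <;> omega
      · simp [gFun, hFun, ha, hai]

@[simp] lemma gPerm_apply (n : ℕ) [NeZero n] (i : Fin n) (hi : i ≠ 0) :
    ⇑(gPerm n i hi) = gFun n i := rfl

@[simp] lemma gPerm_inv_apply (n : ℕ) [NeZero n] (i : Fin n) (hi : i ≠ 0) :
    ⇑(gPerm n i hi)⁻¹ = hFun n i := rfl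

lemma translates_one (n : ℕ) : Translates n ⇑(1 : Equiv.Perm (Fin n × ℕ)) 0 :=
  ⟨∅, fun x _ => by simp⟩

lemma translates_mul {n : ℕ} {g h : Equiv.Perm (Fin n × ℕ)} {a b : Fin n → ℤ}
    (hg : Translates n ⇑g a) (hh : Translates n ⇑h b) : Translates n ⇑(g * h) (a + b) := by
  obtain ⟨K1, h1⟩ := hg
  obtain ⟨K2, h2⟩ := hh
  refine ⟨K2 ∪ K1.preimage h (h.injective.injOn), fun x hx => ?_⟩
  simp only [Finset.mem_union, Finset.mem_preimage, not_or] at hx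
  have e2 := h2 x hx.1
  have e1 := h1 (h x) hx.2
  simp only [Equiv.Perm.mul_apply, Pi.add_apply]
  refine ⟨e1.1.trans e2.1, ?_⟩
  rw [e1.2, e2.2, e2.1]
  ring

lemma translates_inv {n : ℕ} {g : Equiv.Perm (Fin n × ℕ)} {a : Fin n → ℤ}
    (hg : Translates n ⇑g a) : Translates n ⇑g⁻¹ (-a) := by
  obtain ⟨K, h1⟩ := hg
  refine ⟨K.image g, fun x hx => ?_⟩
  have hx' : g⁻¹ x ∉ K := by
    intro hc
    exact hx (Finset.mem_image.2 ⟨_, hc, by simp⟩)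
  have e := h1 (g⁻¹ x) hx'
  rw [show g (g⁻¹ x) = x from g.apply_symm_apply x] at e
  refine ⟨e.1.symm, ?_⟩
  rw [Pi.neg_apply, e.1, e.2]
  ring

lemma translates_zpow {n : ℕ} {g : Equiv.Perm (Fin n × ℕ)} {a : Fin n → ℤ}
    (hg : Translates n ⇑g a) (k : ℤ) : Translates n ⇑(g ^ k) (k • a) := by
  have hp : ∀ p : ℕ, Translates n ⇑(g ^ p) ((p : ℤ) • a) := by
    intro p
    induction p with
    | zero => simpa using translates_one n
    | succ p ih =>
      have := translates_mul ih hg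
      rw [← pow_succ] at this
      convert this using 1
      push_cast
      module
  obtain ⟨p, rfl | rfl⟩ := Int.eq_nat_or_neg k
  · rw [zpow_natCast]
    exact hp p
  · rw [zpow_neg, zpow_natCast]
    have := translates_inv (hp p)
    convert this using 1
    module

lemma sum_m_eq_zero {n : ℕ} [NeZero n] (g : Equiv.Perm (Fin n × ℕ)) (m : Fin n → ℤ)
    (h : Translates n ⇑g m) : ∑ i, m i = 0 := by
  obtain ⟨K, hK⟩ := h
  set N : ℕ := (K.sup fun x => x.2) + (Finset.univ.sup fun i => (m i).natAbs) + 1 with hN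
  have hNK : ∀ x ∈ K, x.2 < N := by
    intro x hx
    have h1 : x.2 ≤ K.sup fun x => x.2 := Finset.le_sup hx
    omega
  have hNm : ∀ i, (m i).natAbs < N := by
    intro i
    have h1 : (m i).natAbs ≤ Finset.univ.sup fun i => (m i).natAbs :=
      Finset.le_sup (f := fun i => (m i).natAbs) (Finset.mem_univ i)
    omega
  have hNm' : ∀ i, 0 ≤ (N : ℤ) + m i := by
    intro i
    have := hNm i
    omega
  have hout : ∀ x : Fin n × ℕ, N ≤ x.2 → x ∉ K := fun x hx hc => by
    have := hNK x hc; omega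
  set D : Finset (Fin n × ℕ) := Finset.univ ×ˢ Finset.range N with hD
  set E : Finset (Fin n × ℕ) :=
    Finset.univ.biUnion (fun i => {i} ×ˢ Finset.range ((N : ℤ) + m i).toNat) with hE
  have memE : ∀ y : Fin n × ℕ, y ∈ E ↔ (y.2 : ℤ) < (N : ℤ) + m y.1 := by
    intro y
    simp only [hE, Finset.mem_biUnion, Finset.mem_univ, true_and, Finset.mem_product,
      Finset.mem_singleton, Finset.mem_range]
    constructor
    · rintro ⟨i, hi, h2⟩
      rw [hi]
      exact Int.lt_toNat.mp h2
    · intro hy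
      exact ⟨y.1, rfl, Int.lt_toNat.mpr hy⟩
  have key : D.image ⇑g = E := by
    ext y
    simp only [Finset.mem_image, memE]
    constructor
    · rintro ⟨x, hxD, rfl⟩
      by_contra h'
      push_neg at h'
      have hq : (0 : ℤ) ≤ ((g x).2 : ℤ) - m (g x).1 := by have := hNm' (g x).1; omega
      obtain ⟨q, hq2⟩ : ∃ q : ℕ, (q : ℤ) = ((g x).2 : ℤ) - m (g x).1 :=
        ⟨_, Int.toNat_of_nonneg hq⟩
      have hqN : N ≤ q := by have := hNm (g x).1; omega
      have hK' : ((g x).1, q) ∉ K := hout ((g x).1, q) hqN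
      obtain ⟨e1, e2⟩ := hK ((g x).1, q) hK'
      have hgg : g ((g x).1, q) = g x := by
        have h2 : ((g ((g x).1, q)).2 : ℤ) = ((g x).2 : ℤ) := by
          rw [e2]
          show (q : ℤ) + m (g x).1 = ((g x).2 : ℤ)
          omega
        exact Prod.ext e1 (by exact_mod_cast h2)
      have hxx : ((g x).1, q) = x := g.injective hgg
      rw [hD, Finset.mem_product, Finset.mem_range] at hxD
      have : x.2 = q := by rw [← hxx]
      omega
    · intro hy
      refine ⟨g⁻¹ y, ?_, by simp⟩
      rw [hD, Finset.mem_product, Finset.mem_range]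
      refine ⟨Finset.mem_univ _, ?_⟩
      by_contra h'
      push_neg at h'
      have hK' : g⁻¹ y ∉ K := hout _ h'
      obtain ⟨e1, e2⟩ := hK _ hK'
      rw [show g (g⁻¹ y) = y from g.apply_symm_apply y] at e1 e2
      rw [e1] at hy
      omega
  have cardD : D.card = n * N := by
    simp [hD, Finset.card_product]
  have cardE : E.card = ∑ i, ((N : ℤ) + m i).toNat := by
    rw [hE, Finset.card_biUnion]
    · simp [Finset.card_product]
    · intro i _ j _ hij
      simp only [Finset.disjoint_left, Finset.mem_product, Finset.mem_singleton]
      rintro a ⟨h1, _⟩ ⟨h2, _⟩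
      exact hij (h1 ▸ h2)
  have cardim : (D.image ⇑g).card = D.card := Finset.card_image_of_injective _ g.injective
  have hfin : (n * N : ℤ) = ∑ i, ((N : ℤ) + m i) := by
    have h1 : (n * N : ℤ) = ((D.image ⇑g).card : ℤ) := by
      rw [cardim, cardD]; push_cast; ring
    rw [h1, key, cardE]
    push_cast
    exact Finset.sum_congr rfl fun i _ => Int.toNat_of_nonneg (hNm' i)
  rw [Finset.sum_add_distrib, Finset.sum_const, Finset.card_univ, Fintype.card_fin,
    nsmul_eq_mul] at hfin
  linarith [hfin]

lemma comm_eq_swap (n : ℕ) [NeZero n] (i j : Fin n) (hi : i ≠ 0) (hj : j ≠ 0) (hij : i ≠ j) :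
    gPerm n i hi * gPerm n j hj * (gPerm n i hi)⁻¹ * (gPerm n j hj)⁻¹ =
      Equiv.swap (i, 0) (j, 0) := by
  apply Equiv.ext
  rintro ⟨a, p⟩
  simp only [Equiv.Perm.mul_apply, gPerm_apply, gPerm_inv_apply]
  by_cases ha0 : a = 0
  · subst ha0
    simp [gFun, hFun, hi, hj, hij, Ne.symm hi, Ne.symm hj, Equiv.swap_apply_def,
      Prod.ext_iff, Fin.ext_iff]
  · by_cases hai : a = i
    · subst hai
      by_cases hp : p = 0 <;>
        simp [gFun, hFun, hi, hj, hij, hp, Ne.symm hij, Equiv.swap_apply_def,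
          Prod.ext_iff] <;> omega
    · by_cases haj : a = j
      · subst haj
        by_cases hp : p = 0 <;>
          simp [gFun, hFun, hi, hj, hij, hp, ha0, Ne.symm hij, Equiv.swap_apply_def,
            Prod.ext_iff] <;> omega
      · simp [gFun, hFun, ha0, hai, haj, Equiv.swap_apply_def, Prod.ext_iff, hai, haj]

def Hgen (n : ℕ) [NeZero n] : Subgroup (Equiv.Perm (Fin n × ℕ)) :=
  Subgroup.closure {σ : Equiv.Perm (Fin n × ℕ) | ∃ i : Fin n, i ≠ 0 ∧ ⇑σ = gFun n i}

lemma gPerm_mem (n : ℕ) [NeZero n] (i : Fin n) (hi : i ≠ 0) : gPerm n i hi ∈ Hgen n :=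
  Subgroup.subset_closure ⟨i, hi, rfl⟩

lemma fix_pow {α : Type*} (f : Equiv.Perm α) (x : α) (h : f x = x) (p : ℕ) :
    (f ^ p) x = x := by
  induction p with
  | zero => simp
  | succ p ih => rw [pow_succ, Equiv.Perm.mul_apply, h, ih]

lemma gPerm_fix (n : ℕ) [NeZero n] (k : Fin n) (hk : k ≠ 0) (a : Fin n) (q : ℕ)
    (h1 : a ≠ 0) (h2 : a ≠ k) :
    gPerm n k hk (a, q) = (a, q) ∧ (gPerm n k hk)⁻¹ (a, q) = (a, q) := by
  constructor <;> simp [gFun, hFun, gPerm, h1, h2]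

lemma gPerm_pow_ray (n : ℕ) [NeZero n] (k : Fin n) (hk : k ≠ 0) (p q : ℕ) :
    ((gPerm n k hk) ^ p) (k, q) = (k, q + p) := by
  induction p with
  | zero => simp
  | succ p ih =>
    rw [pow_succ', Equiv.Perm.mul_apply, ih]
    simp [gFun, hk]
    omega

lemma gPerm_inv_pow_ray0 (n : ℕ) [NeZero n] (k : Fin n) (hk : k ≠ 0) (p q : ℕ) :
    (((gPerm n k hk)⁻¹) ^ p) (0, q) = (0, q + p) := by
  induction p with
  | zero => simp
  | succ p ih =>
    rw [pow_succ', Equiv.Perm.mul_apply, ih]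
    simp [hFun, gPerm]
    omega

lemma reach (n : ℕ) [NeZero n] (i j : Fin n) (hi : i ≠ 0) (hj : j ≠ 0) (hij : i ≠ j)
    (x : Fin n × ℕ) (hx : x.1 ≠ i) :
    ∃ σ : Equiv.Perm (Fin n × ℕ), σ ∈ Hgen n ∧ σ (j, 0) = x ∧ σ (i, 0) = (i, 0) := by
  obtain ⟨k, p⟩ := x
  simp only at hx
  by_cases hkj : k = j
  · subst hkj
    refine ⟨(gPerm n k hj) ^ p, Subgroup.pow_mem _ (gPerm_mem n k hj) p, ?_, ?_⟩
    · rw [gPerm_pow_ray]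
      simp
    · exact fix_pow _ _ (gPerm_fix n k hj i 0 hi hij).1 p
  · by_cases hk0 : k = 0
    · subst hk0
      refine ⟨((gPerm n j hj)⁻¹) ^ (p + 1), Subgroup.pow_mem _
        (Subgroup.inv_mem _ (gPerm_mem n j hj)) _, ?_, ?_⟩
      · rw [pow_succ, Equiv.Perm.mul_apply]
        have h1 : (gPerm n j hj)⁻¹ (j, 0) = ((0 : Fin n), 0) := by simp [hFun, gPerm, hj]
        rw [h1, gPerm_inv_pow_ray0]
        simp
      · exact fix_pow _ _ (gPerm_fix n j hj i 0 hi hij).2 p.succ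
    · -- k ≠ 0, k ≠ i, k ≠ j
      refine ⟨(gPerm n k hk0) ^ (p + 1) * (gPerm n j hj)⁻¹, ?_, ?_, ?_⟩
      · exact Subgroup.mul_mem _ (Subgroup.pow_mem _ (gPerm_mem n k hk0) _)
          (Subgroup.inv_mem _ (gPerm_mem n j hj))
      · rw [Equiv.Perm.mul_apply]
        have h1 : (gPerm n j hj)⁻¹ (j, 0) = ((0 : Fin n), 0) := by simp [hFun, gPerm, hj]
        rw [h1, pow_succ, Equiv.Perm.mul_apply]
        have h2 : gPerm n k hk0 ((0 : Fin n), 0) = (k, 0) := by simp [gFun]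
        rw [h2, gPerm_pow_ray]
        simp
      · rw [Equiv.Perm.mul_apply,
          (gPerm_fix n j hj i 0 hi hij).2,
          fix_pow _ _ (gPerm_fix n k hk0 i 0 hi (fun h => hx h.symm)).1]

lemma swap_mem_of_ne_ray (n : ℕ) [NeZero n] (i j : Fin n) (hi : i ≠ 0) (hj : j ≠ 0)
    (hij : i ≠ j) (x : Fin n × ℕ) (hx : x.1 ≠ i) : Equiv.swap (i, 0) x ∈ Hgen n := by
  obtain ⟨σ, hσ, h1, h2⟩ := reach n i j hi hj hij x hx
  have : Equiv.swap (i, 0) x = σ * Equiv.swap (i, 0) (j, 0) * σ⁻¹ := by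
    rw [← Equiv.swap_apply_apply, h1, h2]
  rw [this, ← comm_eq_swap n i j hi hj hij]
  exact Subgroup.mul_mem _ (Subgroup.mul_mem _ hσ (Subgroup.mul_mem _ (Subgroup.mul_mem _
    (Subgroup.mul_mem _ (gPerm_mem n i hi) (gPerm_mem n j hj))
    (Subgroup.inv_mem _ (gPerm_mem n i hi))) (Subgroup.inv_mem _ (gPerm_mem n j hj))))
    (Subgroup.inv_mem _ hσ)

lemma all_swaps_mem (n : ℕ) [NeZero n] (hn : 3 ≤ n) (x y : Fin n × ℕ) (hxy : x ≠ y) :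
    Equiv.swap x y ∈ Hgen n := by
  set i1 : Fin n := ⟨1, by omega⟩ with hi1d
  set i2 : Fin n := ⟨2, by omega⟩ with hi2d
  have hi1 : i1 ≠ 0 := by simp [hi1d, Fin.ext_iff]
  have hi2 : i2 ≠ 0 := by simp [hi2d, Fin.ext_iff]
  have h12 : i1 ≠ i2 := by simp [hi1d, hi2d, Fin.ext_iff]
  -- step A
  have stepA : ∀ z : Fin n × ℕ, z.1 ≠ i1 → Equiv.swap (i1, 0) z ∈ Hgen n :=
    fun z hz => swap_mem_of_ne_ray n i1 i2 hi1 hi2 h12 z hz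
  have stepA' : ∀ z : Fin n × ℕ, z.1 ≠ i2 → Equiv.swap (i2, 0) z ∈ Hgen n :=
    fun z hz => swap_mem_of_ne_ray n i2 i1 hi2 hi1 (Ne.symm h12) z hz
  -- step B : all swaps with (i1,0)
  have stepB : ∀ z : Fin n × ℕ, z ≠ (i1, 0) → Equiv.swap (i1, 0) z ∈ Hgen n := by
    intro z hz
    by_cases hz1 : z.1 = i1
    · have hz2 : z ≠ (i2, 0) := by
        intro hc
        rw [hc] at hz1
        exact h12 hz1.symm
      have hτ : Equiv.swap (i2, 0) (i1, 0) ∈ Hgen n := stepA' (i1, 0) (by simpa using h12)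
      have hσz : Equiv.swap (i2, 0) z ∈ Hgen n := stepA' z (by simpa [hz1] using h12)
      have key : Equiv.swap (i1, 0) z =
          Equiv.swap (i2, 0) (i1, 0) * Equiv.swap (i2, 0) z * (Equiv.swap (i2, 0) (i1, 0))⁻¹ := by
        rw [← Equiv.swap_apply_apply, Equiv.swap_apply_left,
          Equiv.swap_apply_of_ne_of_ne hz2 hz]
      rw [key]
      exact Subgroup.mul_mem _ (Subgroup.mul_mem _ hτ hσz) (Subgroup.inv_mem _ hτ)
    · exact stepA z hz1
  by_cases hx1 : x = (i1, 0)
  · rw [hx1]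
    exact stepB y (fun hc => hxy (hx1.trans hc.symm))
  · by_cases hy1 : y = (i1, 0)
    · rw [Equiv.swap_comm, hy1]
      exact stepB x hx1
    · have hσ : Equiv.swap (i1, 0) x ∈ Hgen n := stepB x hx1
      have hσ' : Equiv.swap (i1, 0) y ∈ Hgen n := stepB y hy1
      have key : Equiv.swap x y =
          Equiv.swap (i1, 0) x * Equiv.swap (i1, 0) y * (Equiv.swap (i1, 0) x)⁻¹ := by
        rw [← Equiv.swap_apply_apply, Equiv.swap_apply_left,
          Equiv.swap_apply_of_ne_of_ne hy1 (Ne.symm hxy)]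
      rw [key]
      exact Subgroup.mul_mem _ (Subgroup.mul_mem _ hσ hσ') (Subgroup.inv_mem _ hσ)

lemma finsupp_mem_aux (n : ℕ) [NeZero n] (hn : 3 ≤ n) :
    ∀ (N : ℕ) (K : Finset (Fin n × ℕ)) (g : Equiv.Perm (Fin n × ℕ)), K.card ≤ N →
      (∀ x ∉ K, g x = x) → g ∈ Hgen n := by
  intro N
  induction N with
  | zero =>
    intro K g hcard hsupp
    have hK : K = ∅ := Finset.card_eq_zero.mp (Nat.le_zero.mp hcard)
    have : g = 1 := Equiv.ext fun x => hsupp x (by simp [hK])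
    rw [this]
    exact Subgroup.one_mem _
  | succ N ih =>
    intro K g hcard hsupp
    by_cases hg1 : g = 1
    · rw [hg1]; exact Subgroup.one_mem _
    · obtain ⟨a, ha⟩ : ∃ a, g a ≠ a := by
        by_contra hc
        push_neg at hc
        exact hg1 (Equiv.ext hc)
      have haK : a ∈ K := by
        by_contra hc
        exact ha (hsupp a hc)
      have hgaK : g a ∈ K := by
        by_contra hc
        have := hsupp _ hc
        exact ha (g.injective this)
      set τ : Equiv.Perm (Fin n × ℕ) := Equiv.swap a (g a) with hτd
      have hτ : τ ∈ Hgen n := all_swaps_mem n hn a (g a) (Ne.symm ha)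
      have hstep : ∀ x ∉ K.erase a, (τ * g) x = x := by
        intro x hx
        rw [Finset.mem_erase] at hx
        push_neg at hx
        by_cases hxa : x = a
        · subst hxa
          simp [hτd, Equiv.Perm.mul_apply, Equiv.swap_apply_right]
        · have hxK : x ∉ K := hx hxa
          have hgx : g x = x := hsupp x hxK
          have hxga : x ≠ g a := by
            intro hc
            subst hc
            exact ha (g.injective hgx)
          simp [hτd, Equiv.Perm.mul_apply, hgx, Equiv.swap_apply_of_ne_of_ne hxa hxga]
      have hcard' : (K.erase a).card ≤ N := by
        have := Finset.card_erase_of_mem haK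
        omega
      have hτg : τ * g ∈ Hgen n := ih (K.erase a) (τ * g) hcard' hstep
      have : g = τ⁻¹ * (τ * g) := by group
      rw [this]
      exact Subgroup.mul_mem _ (Subgroup.inv_mem _ hτ) hτg


def mfv (n : ℕ) [NeZero n] (i : Fin n) : Fin n → ℤ := fun j =>
  if j = i then 1 else if j = 0 then -1 else 0

lemma translates_gPerm (n : ℕ) [NeZero n] (i : Fin n) (hi : i ≠ 0) :
    Translates n ⇑(gPerm n i hi) (mfv n i) := by
  refine ⟨{((0 : Fin n), 0)}, ?_⟩
  rintro ⟨a, p⟩ hx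
  have hx' : a = 0 → p ≠ 0 := by
    intro h1 h2
    exact hx (by simp [h1, h2])
  by_cases ha : a = 0
  · subst ha
    have hp := hx' rfl
    refine ⟨by simp [gFun, hp], ?_⟩
    simp [gFun, mfv, hp, Ne.symm hi] <;> omega
  · by_cases hai : a = i
    · subst hai
      refine ⟨by simp [gFun, ha], ?_⟩
      simp [gFun, mfv, ha] <;> omega
    · refine ⟨by simp [gFun, ha, hai], ?_⟩
      simp [gFun, mfv, ha, hai]

def fP (n : ℕ) [NeZero n] : Fin n → Equiv.Perm (Fin n × ℕ) := fun i =>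
  if h : i = 0 then 1 else gPerm n i h

lemma fP_mem (n : ℕ) [NeZero n] (i : Fin n) : fP n i ∈ Hgen n := by
  rw [fP]
  split_ifs with h
  · exact Subgroup.one_mem _
  · exact gPerm_mem n i h

lemma translates_fP (n : ℕ) [NeZero n] (i : Fin n) (hi : i ≠ 0) :
    Translates n ⇑(fP n i) (mfv n i) := by
  rw [fP, dif_neg hi]
  exact translates_gPerm n i hi

lemma translates_list_prod {n : ℕ} {ι : Type*} (l : List ι)
    (f : ι → Equiv.Perm (Fin n × ℕ)) (mf : ι → Fin n → ℤ)
    (h : ∀ i ∈ l, Translates n ⇑(f i) (mf i)) :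
    Translates n ⇑((l.map f).prod) ((l.map mf).sum) := by
  induction l with
  | nil => simpa using translates_one n
  | cons a l ih =>
    simp only [List.map_cons, List.prod_cons, List.sum_cons]
    exact translates_mul (h a List.mem_cons_self)
      (ih fun i hi => h i (List.mem_cons_of_mem _ hi))

/-- For `n ≥ 3`, Houghton's group `H_n` is generated by `g_1, …, g_{n−1}`:
every bijective eventual translation of `Y_n` lies in the subgroup of
`Perm Y_n` generated by the permutations `g_i`. -/
theorem houghton_generated_by_gi (n : ℕ) [NeZero n] (hn : 3 ≤ n)
    (g : Equiv.Perm (Fin n × ℕ)) (hg : IsEventualTranslation n ⇑g) :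
    g ∈ Subgroup.closure
      {σ : Equiv.Perm (Fin n × ℕ) | ∃ i : Fin n, i ≠ 0 ∧ ⇑σ = gFun n i} := by
  show g ∈ Hgen n
  obtain ⟨m, hm⟩ := hg
  have hsum := sum_m_eq_zero g m hm
  set s : Finset (Fin n) := Finset.univ.erase 0 with hs
  set w : Equiv.Perm (Fin n × ℕ) := (s.toList.map (fun i => (fP n i) ^ (m i))).prod with hw
  have hwmem : w ∈ Hgen n := by
    refine Subgroup.list_prod_mem _ ?_
    intro x hxl
    obtain ⟨i, _, rfl⟩ := List.mem_map.mp hxl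
    exact Subgroup.zpow_mem _ (fP_mem n i) _
  have hwt : Translates n ⇑w (∑ i ∈ s, m i • mfv n i) := by
    have := translates_list_prod s.toList (fun i => (fP n i) ^ (m i))
      (fun i => m i • mfv n i) (fun i hi => translates_zpow
        (translates_fP n i (Finset.mem_erase.mp (Finset.mem_toList.mp hi)).1) (m i))
    rwa [Finset.sum_map_toList] at this
  have hV : (∑ i ∈ s, m i • mfv n i) = m := by
    funext j
    rw [Finset.sum_apply]
    simp only [Pi.smul_apply, smul_eq_mul]
    by_cases hj : j = 0
    · subst hj
      have hc : ∀ i ∈ s, m i * mfv n i 0 = -(m i) := by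
        intro i hi
        have hi0 : i ≠ 0 := (Finset.mem_erase.mp hi).1
        simp [mfv, Ne.symm hi0]
      rw [Finset.sum_congr rfl hc]
      have he : ∑ i ∈ s, m i + m 0 = ∑ i, m i := Finset.sum_erase_add _ _ (Finset.mem_univ 0)
      rw [Finset.sum_neg_distrib]
      rw [hsum] at he
      linarith
    · have hjs : j ∈ s := Finset.mem_erase.2 ⟨hj, Finset.mem_univ _⟩
      rw [Finset.sum_eq_single j]
      · simp [mfv]
      · intro i hi hij
        simp [mfv, Ne.symm hij, hj]
      · intro h
        exact absurd hjs h
  have h0 : Translates n ⇑(g * w⁻¹) (m + -(∑ i ∈ s, m i • mfv n i)) :=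
    translates_mul hm (translates_inv hwt)
  rw [hV] at h0
  have h0' : Translates n ⇑(g * w⁻¹) 0 := by simpa using h0
  obtain ⟨K, hK⟩ := h0'
  have hfs : ∀ x ∉ K, (g * w⁻¹) x = x := by
    intro x hx
    obtain ⟨e1, e2⟩ := hK x hx
    simp only [Pi.zero_apply, add_zero] at e2
    exact Prod.ext e1 (by exact_mod_cast e2)
  have hmem := finsupp_mem_aux n hn K.card K (g * w⁻¹) le_rfl hfs
  have hgw : g = (g * w⁻¹) * w := by group
  rw [hgw]
  exact Subgroup.mul_mem _ hmem hwmem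
end

section
/- For n ≥ 3, the commutator subgroup of Houghton's group H_n equals the finitary symmetric group: [H_n, H_n] = Σ_{n,∞}, and the abelianization of H_n is free abelian of rank n−1. -/
/-- Houghton's group `H_n`, as the subgroup of `Perm Y_n` consisting of the
eventual translations. -/
def Houghton (n : ℕ) : Subgroup (Equiv.Perm (Fin n × ℕ)) where
  carrier := {g | IsEventualTranslation n ⇑g}
  one_mem' := ⟨0, ∅, by intro x _; simp⟩
  mul_mem' := by
    rintro a b ⟨ma, Ka, ha⟩ ⟨mb, Kb, hb⟩
    refine ⟨fun i => mb i + ma i,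
      Kb ∪ Ka.preimage b (b.injective.injOn), ?_⟩
    intro x hx
    simp only [Finset.mem_union, Finset.mem_preimage, not_or] at hx
    have h1 := hb x hx.1
    have h2 := ha (b x) hx.2
    refine ⟨by simp [Equiv.Perm.mul_apply, h2.1, h1.1], ?_⟩
    have : ((a (b x)).2 : ℤ) = ((b x).2 : ℤ) + ma (b x).1 := h2.2
    simp only [Equiv.Perm.mul_apply, this, h1.1, h1.2]
    ring
  inv_mem' := by
    rintro g ⟨m, K, hK⟩
    refine ⟨fun i => -m i, K.image g, ?_⟩
    intro x hx
    have hy : g.symm x ∉ K := by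
      intro h
      exact hx (Finset.mem_image.2 ⟨g.symm x, h, by simp⟩)
    have h := hK (g.symm x) hy
    rw [g.apply_symm_apply] at h
    refine ⟨h.1.symm, ?_⟩
    have h2 := h.2
    rw [← h.1] at h2
    simp only [Equiv.Perm.inv_def]
    omega
/-- The finitary symmetric group `Σ_{n,∞}`, the subgroup of `Perm Y_n` of
finitely supported permutations. -/
def FinitarySymm (n : ℕ) : Subgroup (Equiv.Perm (Fin n × ℕ)) where
  carrier := {g | {x | g x ≠ x}.Finite}
  one_mem' := by simp
  mul_mem' := by
    intro a b ha hb
    refine (ha.union hb).subset ?_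
    intro x hx
    by_cases h : b x = x
    · exact Or.inl (by simpa [Equiv.Perm.mul_apply, h] using hx)
    · exact Or.inr h
  inv_mem' := by
    intro g hg
    refine hg.subset ?_
    intro x hx h
    apply hx
    show g⁻¹ x = x
    rw [Equiv.Perm.inv_def]
    exact (Equiv.symm_apply_eq g).2 h.symm


namespace HoughtonAux

open Equiv

open scoped commutatorElement

variable {n : ℕ}

/-! ### The shift permutations -/

def shiftFun (u v : Fin n) : Fin n × ℕ → Fin n × ℕ :=
  fun x => if x.1 = u then (u, x.2 + 1)
    else if x.1 = v then (if x.2 = 0 then (u, 0) else (v, x.2 - 1))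
    else x

def shiftInv (u v : Fin n) : Fin n × ℕ → Fin n × ℕ :=
  fun x => if x.1 = u then (if x.2 = 0 then (v, 0) else (u, x.2 - 1))
    else if x.1 = v then (v, x.2 + 1)
    else x

def shift (u v : Fin n) (huv : u ≠ v) : Equiv.Perm (Fin n × ℕ) where
  toFun := shiftFun u v
  invFun := shiftInv u v
  left_inv := by
    rintro ⟨i, k⟩
    by_cases hu : i = u
    · subst hu; simp [shiftFun, shiftInv, huv, huv.symm]
    · by_cases hv : i = v
      · subst hv; rcases k with _ | k
        · simp [shiftFun, shiftInv, huv, huv.symm, hu]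
        · simp [shiftFun, shiftInv, huv, huv.symm, hu]
      · simp [shiftFun, shiftInv, hu, hv]
  right_inv := by
    rintro ⟨i, k⟩
    by_cases hu : i = u
    · subst hu; rcases k with _ | k
      · simp [shiftFun, shiftInv, huv, huv.symm]
      · simp [shiftFun, shiftInv, huv, huv.symm]
    · by_cases hv : i = v
      · subst hv; simp [shiftFun, shiftInv, huv, huv.symm, hu]
      · simp [shiftFun, shiftInv, hu, hv]

def shiftVec (u v : Fin n) : Fin n → ℤ :=
  fun i => if i = u then 1 else if i = v then -1 else 0

lemma shift_translates (u v : Fin n) (huv : u ≠ v) :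
    Translates n (shift u v huv) (shiftVec u v) := by
  refine ⟨{(v, 0)}, ?_⟩
  rintro ⟨i, k⟩ hx
  simp only [Finset.mem_singleton, Prod.mk.injEq, not_and] at hx
  by_cases hu : i = u
  · subst hu; simp [shift, shiftFun, shiftVec]
  · by_cases hv : i = v
    · subst hv
      have hk : k ≠ 0 := fun h => hx rfl h
      have hs : (shift u i huv) (i, k) = (i, k - 1) := by
        simp [shift, shiftFun, hu, hk]
      rw [hs]
      refine ⟨rfl, ?_⟩
      simp [shiftVec, hu]
      omega
    · simp [shift, shiftFun, shiftVec, hu, hv]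

lemma shift_mem (u v : Fin n) (huv : u ≠ v) : shift u v huv ∈ Houghton n :=
  ⟨shiftVec u v, shift_translates u v huv⟩

lemma comm_shift (u v w : Fin n) (huv : u ≠ v) (hvw : v ≠ w) (huw : u ≠ w) :
    ⁅shift u v huv, shift v w hvw⁆ = Equiv.swap (u, 0) (v, 0) := by
  have hinv : ∀ (a b : Fin n) (hab : a ≠ b), ⇑(shift a b hab)⁻¹ = shiftInv a b := by
    intro a b hab; rfl
  apply Equiv.ext
  rintro ⟨i, k⟩
  simp only [commutatorElement_def, Equiv.Perm.mul_apply, hinv]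
  by_cases hu : i = u
  · subst hu
    rcases k with _ | k
    · simp [shift, shiftFun, shiftInv, huv, hvw, huw, huv.symm, hvw.symm, huw.symm,
        Equiv.swap_apply_def]
    · simp [shift, shiftFun, shiftInv, huv, hvw, huw, huv.symm, hvw.symm, huw.symm,
        Equiv.swap_apply_def, Prod.ext_iff]
  · by_cases hv : i = v
    · subst hv
      rcases k with _ | k
      · simp [shift, shiftFun, shiftInv, huv, hvw, huw, huv.symm, hvw.symm, huw.symm,
          Equiv.swap_apply_def]
      · simp [shift, shiftFun, shiftInv, huv, hvw, huw, huv.symm, hvw.symm, huw.symm,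
          Equiv.swap_apply_def, Prod.ext_iff]
    · by_cases hw : i = w
      · subst hw
        simp [shift, shiftFun, shiftInv, huv, hvw, huw, huv.symm, hvw.symm, huw.symm, hu, hv,
          Equiv.swap_apply_def, Prod.ext_iff]
      · simp [shift, shiftFun, shiftInv, hu, hv, hw, Equiv.swap_apply_def, Prod.ext_iff]

/-! ### The translation vector -/

lemma translates_unique {g : Equiv.Perm (Fin n × ℕ)} {m m' : Fin n → ℤ}
    (h : Translates n g m) (h' : Translates n g m') : m = m' := by
  obtain ⟨K, hK⟩ := h
  obtain ⟨K', hK'⟩ := h'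
  funext i
  set N := (K ∪ K').sup (fun x => x.2) + 1 with hN
  have hx : (i, N) ∉ K ∪ K' := by
    intro h
    have h2 := Finset.le_sup (f := fun x : Fin n × ℕ => x.2) h
    simp only at h2
    omega
  have h1 := hK (i, N) (fun h => hx (Finset.mem_union_left _ h))
  have h2 := hK' (i, N) (fun h => hx (Finset.mem_union_right _ h))
  have e1 := h1.2
  have e2 := h2.2
  dsimp only at e1 e2
  omega

noncomputable def vec (g : ↥(Houghton n)) : Fin n → ℤ :=
  Classical.choose (g.2 : IsEventualTranslation n ⇑(g : Equiv.Perm (Fin n × ℕ)))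

lemma vec_spec (g : ↥(Houghton n)) :
    Translates n ⇑(g : Equiv.Perm (Fin n × ℕ)) (vec g) :=
  Classical.choose_spec (g.2 : IsEventualTranslation n ⇑(g : Equiv.Perm (Fin n × ℕ)))

lemma vec_eq {g : ↥(Houghton n)} {m : Fin n → ℤ}
    (h : Translates n ⇑(g : Equiv.Perm (Fin n × ℕ)) m) : vec g = m :=
  translates_unique (vec_spec g) h

lemma translates_mul {g h : Equiv.Perm (Fin n × ℕ)} {mg mh : Fin n → ℤ}
    (hg : Translates n g mg) (hh : Translates n h mh) :
    Translates n ⇑(g * h) (fun i => mh i + mg i) := by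
  obtain ⟨Kg, hKg⟩ := hg
  obtain ⟨Kh, hKh⟩ := hh
  refine ⟨Kh ∪ Kg.preimage h (h.injective.injOn), ?_⟩
  intro x hx
  simp only [Finset.mem_union, Finset.mem_preimage, not_or] at hx
  have h1 := hKh x hx.1
  have h2 := hKg (h x) hx.2
  refine ⟨by simp [Equiv.Perm.mul_apply, h2.1, h1.1], ?_⟩
  have e1 := h1.1
  have e2 := h1.2
  have e3 := h2.2
  rw [e1] at e3
  simp only [Equiv.Perm.mul_apply]
  omega

lemma vec_mul (g h : ↥(Houghton n)) : vec (g * h) = vec g + vec h := by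
  have := translates_mul (vec_spec g) (vec_spec h)
  have h2 := vec_eq (g := g * h) this
  funext i
  rw [h2]
  exact add_comm _ _

lemma vec_one : vec (1 : ↥(Houghton n)) = 0 :=
  vec_eq ⟨∅, by intro x _; simp⟩

lemma vec_inv (g : ↥(Houghton n)) : vec g⁻¹ = -vec g := by
  have := vec_mul g g⁻¹
  rw [mul_inv_cancel, vec_one] at this
  linear_combination (norm := abel) -this

lemma mem_finitary_iff {g : Equiv.Perm (Fin n × ℕ)} :
    g ∈ FinitarySymm n ↔ {x | g x ≠ x}.Finite := Iff.rfl

lemma mem_finitary_iff_vec {g : ↥(Houghton n)} :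
    (g : Equiv.Perm (Fin n × ℕ)) ∈ FinitarySymm n ↔ vec g = 0 := by
  constructor
  · intro hg
    refine vec_eq ⟨(mem_finitary_iff.1 hg).toFinset, ?_⟩
    intro x hx
    rw [Set.Finite.mem_toFinset] at hx
    simp only [Set.mem_setOf_eq, not_not] at hx
    simp [hx]
  · intro hv
    obtain ⟨K, hK⟩ := vec_spec g
    rw [hv] at hK
    refine mem_finitary_iff.2 (K.finite_toSet.subset ?_)
    intro x hx
    by_contra hxK
    have := hK x hxK
    simp only [Pi.zero_apply, add_zero, Nat.cast_inj] at this
    exact hx (Prod.ext this.1 this.2)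

/-! ### Sum of the translation vector is zero (counting argument) -/

lemma vec_sum_zero (g : ↥(Houghton n)) : ∑ i, vec g i = 0 := by
  obtain ⟨K, hK⟩ := vec_spec g
  set m := vec g with hm
  set gp : Equiv.Perm (Fin n × ℕ) := (g : Equiv.Perm (Fin n × ℕ)) with hgp
  set Ma : ℕ := Finset.univ.sup fun i => (m i).natAbs with hMa
  have hMa' : ∀ i, (m i).natAbs ≤ Ma := fun i => Finset.le_sup (f := fun i => (m i).natAbs) (Finset.mem_univ i)
  set N : ℕ := (K.sup fun x => x.2) + (K.sup fun x => (gp x).2) + Ma + 1 with hNdef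
  have hKN : ∀ x ∈ K, x.2 + Ma < N := by
    intro x hx
    have h1 := Finset.le_sup (f := fun x : Fin n × ℕ => x.2) hx
    omega
  have hgKN : ∀ x ∈ K, (gp x).2 < N := by
    intro x hx
    have h1 := Finset.le_sup (f := fun x : Fin n × ℕ => (gp x).2) hx
    omega
  have hmN : ∀ i, (m i).natAbs < N := fun i => by have := hMa' i; omega
  set W : Finset (Fin n × ℕ) := Finset.univ ×ˢ Finset.range N with hW
  have hcardW : W.card = n * N := by
    simp [hW, Finset.card_univ]
  set P : Finset (Fin n × ℕ) := W.image ⇑(gp⁻¹) with hP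
  have hcardP : P.card = n * N := by
    rw [hP, Finset.card_image_of_injective _ (Equiv.injective _), hcardW]
  have hmemP : ∀ x : Fin n × ℕ, x ∈ P ↔ gp x ∈ W := by
    intro x
    simp only [hP, Finset.mem_image]
    constructor
    · rintro ⟨y, hy, rfl⟩
      simpa using hy
    · intro h
      exact ⟨gp x, h, by simp⟩
  set Q : Finset (Fin n × ℕ) :=
    Finset.univ.biUnion fun i =>
      (Finset.range ((N : ℤ) - m i).toNat).image fun k => (i, k) with hQ
  have hmemQ : ∀ x : Fin n × ℕ, x ∈ Q ↔ (x.2 : ℤ) < (N : ℤ) - m x.1 := by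
    rintro ⟨i, k⟩
    simp only [hQ, Finset.mem_biUnion, Finset.mem_univ, true_and, Finset.mem_image,
      Finset.mem_range, Prod.mk.injEq]
    constructor
    · rintro ⟨j, kk, hkk, rfl, rfl⟩
      have := hmN j
      omega
    · intro h
      exact ⟨i, k, by omega, rfl, rfl⟩
  have hPQ : P = Q := by
    ext x
    rw [hmemP, hmemQ]
    by_cases hx : x ∈ K
    · have h1 := hKN x hx
      have h2 := hgKN x hx
      have h3 := hMa' x.1
      simp only [hW, Finset.mem_product, Finset.mem_univ, Finset.mem_range, true_and]
      constructor
      · intro _; omega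
      · intro _; exact h2
    · have h1 := hK x hx
      simp only [hW, Finset.mem_product, Finset.mem_univ, Finset.mem_range, true_and]
      have e2 := h1.2
      omega
  have hcardQ : Q.card = ∑ i, ((N : ℤ) - m i).toNat := by
    rw [hQ, Finset.card_biUnion]
    · refine Finset.sum_congr rfl fun i _ => ?_
      rw [Finset.card_image_of_injective, Finset.card_range]
      intro a b hab
      simpa using hab
    · intro a _ b _ hab
      simp only [Finset.disjoint_left, Finset.mem_image, Finset.mem_range]
      rintro ⟨j, kk⟩ ⟨k1, hk1, hk1'⟩ ⟨k2, hk2, hk2'⟩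
      apply hab
      obtain ⟨rfl, rfl⟩ := Prod.mk.injEq .. ▸ hk1'
      obtain ⟨h1, h2⟩ := Prod.mk.injEq .. ▸ hk2'
      exact h1.symm
  have key : (n : ℤ) * N = ∑ i, ((N : ℤ) - m i) := by
    have h1 : P.card = Q.card := by rw [hPQ]
    rw [hcardP, hcardQ] at h1
    have h2 : ((∑ i, ((N : ℤ) - m i).toNat : ℕ) : ℤ) = ∑ i, ((N : ℤ) - m i) := by
      push_cast
      refine Finset.sum_congr rfl fun i _ => ?_
      rw [Int.toNat_of_nonneg]
      have := hmN i
      omega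
    rw [← h2, ← h1]
    push_cast
    ring
  have h3 : ∑ i, ((N : ℤ) - m i) = n * N - ∑ i, m i := by
    rw [Finset.sum_sub_distrib]
    simp [Finset.card_univ, mul_comm]
  linarith [key, h3]

/-! ### Part 1: the commutator subgroup -/

lemma finitary_le_houghton : FinitarySymm n ≤ Houghton n := by
  intro g hg
  refine ⟨0, (mem_finitary_iff.1 hg).toFinset, ?_⟩
  intro x hx
  rw [Set.Finite.mem_toFinset] at hx
  simp only [Set.mem_setOf_eq, not_not] at hx
  simp [hx]

lemma commutator_le_finitary : ⁅Houghton n, Houghton n⁆ ≤ FinitarySymm n := by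
  rw [Subgroup.commutator_le]
  intro g hg h hh
  set g' : ↥(Houghton n) := ⟨g, hg⟩
  set h' : ↥(Houghton n) := ⟨h, hh⟩
  have : ⁅g, h⁆ = ((⁅g', h'⁆ : ↥(Houghton n)) : Equiv.Perm (Fin n × ℕ)) := rfl
  rw [this]
  rw [mem_finitary_iff_vec]
  simp only [commutatorElement_def, vec_mul, vec_inv]
  abel

lemma swap_mem_finitary {a b : Fin n × ℕ} : Equiv.swap a b ∈ FinitarySymm n := by
  refine mem_finitary_iff.2 (Set.Finite.subset ((Set.finite_singleton b).insert a) ?_)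
  intro x hx
  simp only [Set.mem_setOf_eq] at hx
  by_contra hmem
  simp only [Set.mem_insert_iff, Set.mem_singleton_iff, not_or] at hmem
  exact hx (Equiv.swap_apply_of_ne_of_ne hmem.1 hmem.2)

lemma conj_mem_commutator {f c : Equiv.Perm (Fin n × ℕ)}
    (hf : f ∈ Houghton n) (hc : c ∈ ⁅Houghton n, Houghton n⁆) :
    f * c * f⁻¹ ∈ ⁅Houghton n, Houghton n⁆ := by
  have hmap : Subgroup.map ((MulAut.conj f).toMonoidHom) (Houghton n) = Houghton n := by
    apply le_antisymm
    · rintro x ⟨y, hy, rfl⟩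
      exact Subgroup.mul_mem _ (Subgroup.mul_mem _ hf hy) (Subgroup.inv_mem _ hf)
    · intro x hx
      refine ⟨f⁻¹ * x * f, ?_, by simp [MulAut.conj]; group⟩
      exact Subgroup.mul_mem _ (Subgroup.mul_mem _ (Subgroup.inv_mem _ hf) hx) hf
  have : f * c * f⁻¹ ∈ Subgroup.map ((MulAut.conj f).toMonoidHom) ⁅Houghton n, Houghton n⁆ :=
    ⟨c, hc, by simp [MulAut.conj]⟩
  rwa [Subgroup.map_commutator, hmap] at this

lemma swap_mem_commutator (hn : 3 ≤ n) {a b : Fin n × ℕ} (hab : a ≠ b) :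
    Equiv.swap a b ∈ ⁅Houghton n, Houghton n⁆ := by
  set u : Fin n := ⟨0, by omega⟩
  set v : Fin n := ⟨1, by omega⟩
  set w : Fin n := ⟨2, by omega⟩
  have huv : u ≠ v := by simp [u, v, Fin.ext_iff]
  have hvw : v ≠ w := by simp [v, w, Fin.ext_iff]
  have huw : u ≠ w := by simp [u, w, Fin.ext_iff]
  have hbase : Equiv.swap ((u, 0) : Fin n × ℕ) (v, 0) ∈ ⁅Houghton n, Houghton n⁆ := by
    rw [← comm_shift u v w huv hvw huw]
    exact Subgroup.commutator_mem_commutator (shift_mem u v huv) (shift_mem v w hvw)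
  set p : Fin n × ℕ := (u, 0)
  set q : Fin n × ℕ := (v, 0)
  have hpq : p ≠ q := by simp [p, q, Prod.ext_iff, huv]
  set f₁ : Equiv.Perm (Fin n × ℕ) := Equiv.swap p a
  set f₂ : Equiv.Perm (Fin n × ℕ) := Equiv.swap (f₁ q) b
  set f : Equiv.Perm (Fin n × ℕ) := f₂ * f₁
  have hfp : f p = a := by
    have h1 : f₁ p = a := Equiv.swap_apply_left p a
    have h2 : f₂ a = a := by
      apply Equiv.swap_apply_of_ne_of_ne
      · intro h
        exact hpq (f₁.injective (by rw [h1, h]))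
      · exact hab
    simp only [f, Equiv.Perm.mul_apply, h1, h2]
  have hfq : f q = b := by
    simp only [f, Equiv.Perm.mul_apply, f₂]
    exact Equiv.swap_apply_left _ _
  have hf : f ∈ Houghton n :=
    Subgroup.mul_mem _ (finitary_le_houghton swap_mem_finitary)
      (finitary_le_houghton swap_mem_finitary)
  have : Equiv.swap a b = f * Equiv.swap p q * f⁻¹ := by
    rw [← hfp, ← hfq]
    exact Equiv.swap_apply_apply f p q
  rw [this]
  exact conj_mem_commutator hf hbase

lemma finitary_le_commutator (hn : 3 ≤ n) :
    FinitarySymm n ≤ ⁅Houghton n, Houghton n⁆ := by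
  intro g hg
  have hfin : {x | g x ≠ x}.Finite := mem_finitary_iff.1 hg
  set S : Finset (Fin n × ℕ) := hfin.toFinset with hS
  set p : Fin n × ℕ → Prop := fun x => x ∈ S with hp
  have h₁ : ∀ x, p (g x) ↔ p x := by
    intro x
    simp only [hp, hS, Set.Finite.mem_toFinset, Set.mem_setOf_eq]
    constructor
    · intro h h'
      exact h (by rw [h', h'])
    · intro h h'
      exact h (g.injective h')
  have h₂ : ∀ x, g x ≠ x → p x := by
    intro x hx
    simp only [hp, hS, Set.Finite.mem_toFinset, Set.mem_setOf_eq]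
    exact hx
  have key : Equiv.Perm.ofSubtype (g.subtypePerm h₁) = g :=
    Equiv.Perm.ofSubtype_subtypePerm h₁ h₂
  have hcl : g.subtypePerm h₁ ∈
      Subgroup.closure {σ : Equiv.Perm {x // p x} | σ.IsSwap} := by
    rw [Equiv.Perm.closure_isSwap]
    trivial
  have hle : Subgroup.closure {σ : Equiv.Perm {x // p x} | σ.IsSwap} ≤
      Subgroup.comap (Equiv.Perm.ofSubtype : Equiv.Perm {x // p x} →* Equiv.Perm (Fin n × ℕ))
        ⁅Houghton n, Houghton n⁆ := by
    rw [Subgroup.closure_le]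
    rintro σ ⟨a, b, hab, rfl⟩
    simp only [SetLike.mem_coe, Subgroup.mem_comap]
    rw [Equiv.Perm.ofSubtype_swap_eq]
    exact swap_mem_commutator hn (fun h => hab (Subtype.ext h))
  have := hle hcl
  simp only [Subgroup.mem_comap] at this
  rwa [key] at this

lemma commutator_eq_finitary (hn : 3 ≤ n) :
    ⁅Houghton n, Houghton n⁆ = FinitarySymm n :=
  le_antisymm commutator_le_finitary (finitary_le_commutator hn)

/-! ### Part 2: the abelianization -/

noncomputable def psi (n : ℕ) : ↥(Houghton n) →* Multiplicative (Fin (n - 1) → ℤ) where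
  toFun g := Multiplicative.ofAdd fun i => vec g (Fin.castLE (Nat.sub_le n 1) i)
  map_one' := by
    simp only [vec_one]
    rfl
  map_mul' g h := by
    simp only [vec_mul]
    rfl

lemma psi_apply (g : ↥(Houghton n)) (i : Fin (n - 1)) :
    Multiplicative.toAdd (psi n g) i = vec g (Fin.castLE (Nat.sub_le n 1) i) := rfl

lemma vec_eq_zero_of_trunc {g : ↥(Houghton n)}
    (h : ∀ i : Fin (n - 1), vec g (Fin.castLE (Nat.sub_le n 1) i) = 0) :
    vec g = 0 := by
  have hsum := vec_sum_zero g
  funext j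
  by_cases hj : (j : ℕ) < n - 1
  · have : j = Fin.castLE (Nat.sub_le n 1) ⟨(j : ℕ), hj⟩ := by
      apply Fin.ext
      rfl
    rw [this]
    exact h _
  · -- j is the last index
    have hval : (j : ℕ) = n - 1 := by
      have := j.isLt
      omega
    have : ∑ i, vec g i = vec g j := by
      apply Finset.sum_eq_single
      · intro i _ hij
        have hi : (i : ℕ) < n - 1 := by
          have h1 := i.isLt
          have : (i : ℕ) ≠ (j : ℕ) := fun hh => hij (Fin.ext hh)
          omega
        have : i = Fin.castLE (Nat.sub_le n 1) ⟨(i : ℕ), hi⟩ := by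
          apply Fin.ext
          rfl
        rw [this]
        exact h _
      · intro hj'
        exact absurd (Finset.mem_univ j) hj'
    rw [this] at hsum
    simpa using hsum

lemma ker_psi (hn : 3 ≤ n) : (psi n).ker = commutator ↥(Houghton n) := by
  have hmap : Subgroup.map (Houghton n).subtype (commutator ↥(Houghton n)) =
      ⁅Houghton n, Houghton n⁆ := by
    rw [commutator_def, Subgroup.map_commutator, ← MonoidHom.range_eq_map,
      Subgroup.range_subtype]
  apply le_antisymm
  · intro g hg
    have hvec : vec g = 0 := by
      apply vec_eq_zero_of_trunc
      intro i
      have : psi n g = 1 := hg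
      have h2 := congrFun (congrArg Multiplicative.toAdd this) i
      exact h2
    have : (g : Equiv.Perm (Fin n × ℕ)) ∈ ⁅Houghton n, Houghton n⁆ := by
      rw [commutator_eq_finitary hn]
      exact mem_finitary_iff_vec.2 hvec
    rw [← hmap] at this
    obtain ⟨y, hy, hyg⟩ := this
    have : y = g := Subtype.ext hyg
    rwa [← this]
  · exact Abelianization.commutator_subset_ker (psi n)

lemma psi_surjective (hn : 3 ≤ n) : Function.Surjective (psi n) := by
  have hrange : ∀ a : Multiplicative (Fin (n - 1) → ℤ), a ∈ (psi n).range := by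
    intro a
    set vlast : Fin n := ⟨n - 1, by omega⟩ with hvlast
    have hne : ∀ i : Fin (n - 1), Fin.castLE (Nat.sub_le n 1) i ≠ vlast := by
      intro i h
      have := i.isLt
      have h2 : (i : ℕ) = n - 1 := congrArg Fin.val h
      omega
    set t : Fin (n - 1) → ↥(Houghton n) := fun i =>
      ⟨shift (Fin.castLE (Nat.sub_le n 1) i) vlast (hne i),
        shift_mem _ _ (hne i)⟩ with ht
    have hvec_t : ∀ i, vec (t i) = shiftVec (Fin.castLE (Nat.sub_le n 1) i) vlast := by
      intro i
      exact vec_eq (shift_translates _ _ (hne i))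
    set c : Fin (n - 1) → ℤ := Multiplicative.toAdd a with hc
    have h2 : ∀ i, psi n (t i) = Multiplicative.ofAdd (Pi.single i (1 : ℤ)) := by
      intro i
      apply Multiplicative.toAdd.injective
      funext j
      rw [psi_apply, hvec_t]
      simp only [shiftVec, toAdd_ofAdd]
      rw [if_neg (hne j)]
      by_cases hij : j = i
      · subst hij
        simp [Pi.single_eq_same]
      · rw [if_neg, Pi.single_eq_of_ne hij]
        intro h
        exact hij (Fin.castLE_injective _ h)
    have hmem : ∀ i, Multiplicative.ofAdd (Pi.single i (c i)) ∈ (psi n).range := by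
      intro i
      refine ⟨t i ^ (c i), ?_⟩
      rw [map_zpow, h2]
      rw [← ofAdd_zsmul]
      congr 1
      funext j
      by_cases hij : j = i
      · subst hij
        simp
      · simp [Pi.single_eq_of_ne hij]
    have ha : a = ∏ i, Multiplicative.ofAdd (Pi.single i (c i)) := by
      apply Multiplicative.toAdd.injective
      rw [← ofAdd_sum, toAdd_ofAdd]
      rw [hc]
      exact (Finset.univ_sum_single _).symm
    rw [ha]
    exact Subgroup.prod_mem _ fun i _ => hmem i
  intro a
  obtain ⟨g, hg⟩ := hrange a
  exact ⟨g, hg⟩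

end HoughtonAux

theorem houghton_commutator_and_abelianization (n : ℕ) (hn : 3 ≤ n) :
    ⁅Houghton n, Houghton n⁆ = FinitarySymm n ∧
    Nonempty (Abelianization ↥(Houghton n) ≃*
      Multiplicative (Fin (n - 1) → ℤ)) := by
  refine ⟨HoughtonAux.commutator_eq_finitary hn, ?_⟩
  set Φ := Abelianization.lift (HoughtonAux.psi n) with hPhi
  have hsurj : Function.Surjective Φ := by
    intro b
    obtain ⟨g, hg⟩ := HoughtonAux.psi_surjective hn b
    exact ⟨Abelianization.of g, hg⟩
  have hinj : Function.Injective Φ := by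
    refine (injective_iff_map_eq_one Φ).2 ?_
    intro x
    refine QuotientGroup.induction_on x ?_
    intro g hg
    have hker : g ∈ (HoughtonAux.psi n).ker := hg
    rw [HoughtonAux.ker_psi hn] at hker
    exact (QuotientGroup.eq_one_iff g).2 hker
  exact ⟨MulEquiv.ofBijective Φ ⟨hinj, hsurj⟩⟩
end
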